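/- arXiv:1710.02501 — 3 statements merged into one kernel-verified Lean document; each statement's English description precedes it below -/
import Mathlib

section
/- In any linear system (P,ℒ), the number of lines satisfies ν₂ + Δ ≤ |ℒ| + 2, where ν₂ is the 2-packing number and Δ is the maximum degree; that is, |ℒ| ≥ ν₂ + Δ − 2. -/
open Finset

/-- `(P, L)` is a linear system: lines are nonempty subsets of the point set `P`,
and any two distinct lines share at most one point. -/
def IsLinearSystem {α : Type*} [DecidableEq α] (P : Finset α) (L : Finset (Finset α)) : Prop :=
  (∀ l ∈ L, l.Nonempty) ∧ (∀ l ∈ L, l ⊆ P) ∧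
    ∀ l ∈ L, ∀ l' ∈ L, l ≠ l' → (l ∩ l').card ≤ 1

/-- `T` is a transversal of the linear system `(P, L)`. -/
def IsTransversal {α : Type*} [DecidableEq α] (P : Finset α) (L : Finset (Finset α))
    (T : Finset α) : Prop :=
  T ⊆ P ∧ ∀ l ∈ L, (T ∩ l).Nonempty

/-- The transversal number `τ` of `(P, L)`. -/
noncomputable def tau {α : Type*} [DecidableEq α] (P : Finset α) (L : Finset (Finset α)) : ℕ :=
  sInf {n | ∃ T : Finset α, IsTransversal P L T ∧ T.card = n}

/-- `R` is a 2-packing of `L`: no three distinct lines of `R` have a common point. -/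
def Is2Packing {α : Type*} [DecidableEq α] (L R : Finset (Finset α)) : Prop :=
  R ⊆ L ∧ ∀ l₁ ∈ R, ∀ l₂ ∈ R, ∀ l₃ ∈ R,
    l₁ ≠ l₂ → l₁ ≠ l₃ → l₂ ≠ l₃ → l₁ ∩ l₂ ∩ l₃ = ∅

/-- The 2-packing number `ν₂` of `(P, L)`. -/
noncomputable def nu2 {α : Type*} [DecidableEq α] (L : Finset (Finset α)) : ℕ :=
  sSup {n | ∃ R : Finset (Finset α), Is2Packing L R ∧ R.card = n}

/-- The degree of a point `p`: the number of lines containing `p`. -/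
def degree {α : Type*} [DecidableEq α] (L : Finset (Finset α)) (p : α) : ℕ :=
  (L.filter fun l => p ∈ l).card

/-- The maximum degree `Δ` over all points of `P`. -/
def maxDegree {α : Type*} [DecidableEq α] (P : Finset α) (L : Finset (Finset α)) : ℕ :=
  P.sup (degree L)


lemma key {α : Type*} [DecidableEq α] (L R : Finset (Finset α)) (hR : Is2Packing L R)
    (p : α) : R.card + degree L p ≤ L.card + 2 := by
  set Lp := L.filter fun l => p ∈ l with hLp
  have hsub : Lp ⊆ L := filter_subset _ _
  have h2 : (R ∩ Lp).card ≤ 2 := by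
    by_contra h
    push_neg at h
    obtain ⟨a, b, c, ha, hb, hc, hab, hac, hbc⟩ := Finset.two_lt_card_iff.mp h
    have hempty := hR.2 a (mem_of_mem_inter_left ha) b (mem_of_mem_inter_left hb)
      c (mem_of_mem_inter_left hc) hab hac hbc
    have hp : p ∈ a ∩ b ∩ c := by
      simp only [mem_inter]
      exact ⟨⟨(mem_filter.mp (mem_of_mem_inter_right ha)).2,
        (mem_filter.mp (mem_of_mem_inter_right hb)).2⟩,
        (mem_filter.mp (mem_of_mem_inter_right hc)).2⟩
    rw [hempty] at hp
    exact absurd hp (notMem_empty p)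
  have hsplit : (R ∩ Lp).card + (R \ Lp).card = R.card := by
    rw [Finset.card_inter_add_card_sdiff]
  have hmono : (R \ Lp).card ≤ (L \ Lp).card := card_le_card (sdiff_subset_sdiff hR.1 le_rfl)
  have hLsplit : (L \ Lp).card + Lp.card = L.card := Finset.card_sdiff_add_card_eq_card hsub
  have : degree L p = Lp.card := rfl
  omega

/-- In any linear system, `ν₂ + Δ ≤ |ℒ| + 2`. -/
theorem stmt14 {α : Type*} [DecidableEq α] (P : Finset α) (L : Finset (Finset α))
    (hLS : IsLinearSystem P L) :
    nu2 L + maxDegree P L ≤ L.card + 2 := by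
  have hDle : maxDegree P L ≤ L.card + 2 := by
    apply Finset.sup_le
    intro p hp
    calc degree L p ≤ L.card := card_le_card (filter_subset _ _)
    _ ≤ L.card + 2 := by omega
  rw [← Nat.le_sub_iff_add_le hDle]
  unfold nu2
  have hpack : Is2Packing L (∅ : Finset (Finset α)) := ⟨empty_subset L, by simp⟩
  refine csSup_le ⟨0, show (0:ℕ) ∈ {n | ∃ R : Finset (Finset α), Is2Packing L R ∧ R.card = n} from ⟨∅, hpack, card_empty⟩⟩ ?_
  rintro n ⟨R, hR, rfl⟩
  rw [Nat.le_sub_iff_add_le hDle]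
  rcases P.eq_empty_or_nonempty with h | h
  · have : maxDegree P L = 0 := by simp [maxDegree, h]
    have := card_le_card hR.1
    omega
  · have hcardR : R.card ≤ L.card + 2 := le_trans (card_le_card hR.1) (by omega)
    rw [Nat.add_comm, ← Nat.le_sub_iff_add_le hcardR]
    apply Finset.sup_le
    intro p hp
    rw [Nat.le_sub_iff_add_le hcardR, Nat.add_comm]
    exact key L R hR p
end

section
/- Let r ≥ 2 and let (P,ℒ) be an r-uniform linear system with maximum degree Δ ≤ 2. Then (r+1)·τ ≤ |P| + |ℒ| (equivalently, τ ≤ (|P| + |ℒ|)/(r+1)), where τ is the transversal number. -/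
open Finset

set_option linter.unusedSectionVars false
set_option maxHeartbeats 1000000

namespace Stmt17Aux

variable {β : Type*} [DecidableEq β]

def IsMatchingF (M : Finset (Finset β)) : Prop :=
  ∀ e ∈ M, ∀ f ∈ M, e ≠ f → Disjoint e f

noncomputable def nuF (E : Finset (Finset β)) : ℕ :=
  sSup {n | ∃ M : Finset (Finset β), M ⊆ E ∧ IsMatchingF M ∧ M.card = n}

lemma nuF_bddAbove (E : Finset (Finset β)) :
    BddAbove {n | ∃ M : Finset (Finset β), M ⊆ E ∧ IsMatchingF M ∧ M.card = n} := by
  refine ⟨E.card, ?_⟩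
  rintro n ⟨M, hME, _, rfl⟩
  exact Finset.card_le_card hME

lemma nuF_nonempty (E : Finset (Finset β)) :
    Set.Nonempty {n | ∃ M : Finset (Finset β), M ⊆ E ∧ IsMatchingF M ∧ M.card = n} :=
  ⟨0, ∅, by simp [IsMatchingF]⟩

lemma le_nuF {E M : Finset (Finset β)} (hME : M ⊆ E) (hM : IsMatchingF M) :
    M.card ≤ nuF E :=
  le_csSup (nuF_bddAbove E) ⟨M, hME, hM, rfl⟩

lemma exists_nuF (E : Finset (Finset β)) :
    ∃ M : Finset (Finset β), M ⊆ E ∧ IsMatchingF M ∧ M.card = nuF E :=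
  Nat.sSup_mem (nuF_nonempty E) (nuF_bddAbove E)

lemma nuF_mono {E E' : Finset (Finset β)} (h : E' ⊆ E) : nuF E' ≤ nuF E := by
  obtain ⟨M, hM1, hM2, hM3⟩ := exists_nuF E'
  rw [← hM3]
  exact le_nuF (hM1.trans h) hM2

lemma isMatchingF_subset {M M' : Finset (Finset β)} (h : M' ⊆ M) (hM : IsMatchingF M) :
    IsMatchingF M' := fun e he f hf hef => hM e (h he) f (h hf) hef

lemma isMatchingF_insert {M : Finset (Finset β)} (hM : IsMatchingF M) {e : Finset β}
    (h : ∀ f ∈ M, Disjoint e f) : IsMatchingF (insert e M) := by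
  intro x hx y hy hxy
  rcases Finset.mem_insert.mp hx with hx1 | hx2 <;>
    rcases Finset.mem_insert.mp hy with hy1 | hy2
  · exact absurd (hx1.trans hy1.symm) hxy
  · exact hx1 ▸ h y hy2
  · exact hy1 ▸ (h x hx2).symm
  · exact hM x hx2 y hy2 hxy

lemma pair_other {e : Finset β} (h2 : e.card = 2) {u : β} (hu : u ∈ e) :
    ∃ a, a ≠ u ∧ e = {u, a} := by
  obtain ⟨x, y, hxy, rfl⟩ := Finset.card_eq_two.mp h2
  rcases Finset.mem_insert.mp hu with rfl | hu
  · exact ⟨y, fun h => hxy h.symm, rfl⟩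
  · rw [Finset.mem_singleton] at hu
    subst hu
    exact ⟨x, hxy, by rw [Finset.pair_comm]⟩

/-- The alternating-path exchange lemma. -/
lemma lemX (E : Finset (Finset β)) (hE2 : ∀ e ∈ E, e.card = 2) (w : β) :
    ∀ (k : ℕ) (M N : Finset (Finset β)) (u : β),
    M ⊆ E → N ⊆ E → IsMatchingF M → IsMatchingF N →
    M.card = nuF E → N.card = nuF E →
    (N \ M).card ≤ k →
    (∀ f ∈ M, u ∉ f) → (∃ e ∈ N, u ∈ e) → (∀ f ∈ N, w ∉ f) →
    (∃ M', M' ⊆ E ∧ IsMatchingF M' ∧ M'.card = nuF E ∧ (∀ f ∈ M', w ∉ f) ∧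
       (∀ x, (∀ f ∈ M, x ∉ f) → x ≠ u → (∀ f ∈ M', x ∉ f))) ∨
    (∃ N', N' ⊆ E ∧ IsMatchingF N' ∧ N'.card = nuF E ∧ (∀ f ∈ N', w ∉ f) ∧
       (N' \ M).card < (N \ M).card) := by
  intro k
  induction k with
  | zero =>
    intro M N u hME hNE hMm hNm hMc hNc hk hMu hNu hNw
    obtain ⟨e₁, he1N, hu1⟩ := hNu
    have he1M : e₁ ∉ M := fun h => hMu e₁ h hu1
    have : e₁ ∈ N \ M := Finset.mem_sdiff.mpr ⟨he1N, he1M⟩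
    have := Finset.card_pos.mpr ⟨e₁, this⟩
    omega
  | succ k ih =>
    intro M N u hME hNE hMm hNm hMc hNc hk hMu hNu hNw
    obtain ⟨e₁, he1N, hu1⟩ := hNu
    have he1M : e₁ ∉ M := fun h => hMu e₁ h hu1
    have he1NM : e₁ ∈ N \ M := Finset.mem_sdiff.mpr ⟨he1N, he1M⟩
    obtain ⟨a, hau, he1eq⟩ := pair_other (hE2 e₁ (hNE he1N)) hu1
    have ha1 : a ∈ e₁ := by rw [he1eq]; simp
    have hMcov_a : ∃ f ∈ M, a ∈ f := by
      by_contra hno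
      push_neg at hno
      have hdisj : ∀ f ∈ M, Disjoint e₁ f := by
        intro f hf
        rw [he1eq, Finset.disjoint_left]
        intro x hx
        rcases Finset.mem_insert.mp hx with rfl | hx
        · exact hMu f hf
        · rw [Finset.mem_singleton] at hx; subst hx; exact hno f hf
      have hins : IsMatchingF (insert e₁ M) := isMatchingF_insert hMm hdisj
      have hsub : insert e₁ M ⊆ E := by
        intro f hf
        rcases Finset.mem_insert.mp hf with rfl | hf
        · exact hNE he1N
        · exact hME hf
      have := le_nuF hsub hins
      rw [Finset.card_insert_of_notMem he1M, hMc] at this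
      omega
    obtain ⟨e₂, he2M, ha2⟩ := hMcov_a
    obtain ⟨b, hba, he2eq⟩ := pair_other (hE2 e₂ (hME he2M)) ha2
    have hb2 : b ∈ e₂ := by rw [he2eq]; simp
    have hu2 : u ∉ e₂ := hMu e₂ he2M
    have hbu : b ≠ u := fun h => hu2 (h ▸ hb2)
    have he12 : e₁ ≠ e₂ := fun h => hu2 (h ▸ hu1)
    have he2N : e₂ ∉ N := by
      intro h
      exact Finset.disjoint_left.mp (hNm e₁ he1N e₂ h he12) ha1 ha2
    have hMa_unique : ∀ f ∈ M, a ∈ f → f = e₂ := by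
      intro f hf haf
      by_contra hne
      exact Finset.disjoint_left.mp (hMm f hf e₂ he2M hne) haf ha2
    have hNa_unique : ∀ f ∈ N, a ∈ f → f = e₁ := by
      intro f hf haf
      by_contra hne
      exact Finset.disjoint_left.mp (hNm f hf e₁ he1N hne) haf ha1
    set Mt : Finset (Finset β) := insert e₁ (M.erase e₂) with hMtdef
    have he1notin : e₁ ∉ M.erase e₂ := fun h => he1M (Finset.mem_of_mem_erase h)
    have hMtE : Mt ⊆ E := by
      intro f hf
      rcases Finset.mem_insert.mp hf with rfl | hf
      · exact hNE he1N
      · exact hME (Finset.mem_of_mem_erase hf)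
    have hMt_match : IsMatchingF Mt := by
      refine isMatchingF_insert (isMatchingF_subset (Finset.erase_subset _ _) hMm) ?_
      intro f hf
      have hfM := Finset.mem_of_mem_erase hf
      have hfe2 := Finset.ne_of_mem_erase hf
      rw [he1eq, Finset.disjoint_left]
      intro x hx
      rcases Finset.mem_insert.mp hx with rfl | hx
      · exact hMu f hfM
      · rw [Finset.mem_singleton] at hx; subst hx
        intro haf
        exact hfe2 (hMa_unique f hfM haf)
    have hMposs : 0 < M.card := Finset.card_pos.mpr ⟨e₂, he2M⟩
    have hMt_card : Mt.card = M.card := by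
      rw [hMtdef, Finset.card_insert_of_notMem he1notin, Finset.card_erase_of_mem he2M]
      omega
    have hMt_b : ∀ f ∈ Mt, b ∉ f := by
      intro f hf
      rcases Finset.mem_insert.mp hf with rfl | hf
      · rw [he1eq]
        intro hx
        rcases Finset.mem_insert.mp hx with h | h
        · exact hbu h
        · rw [Finset.mem_singleton] at h; exact hba h
      · intro hbf
        have hfM := Finset.mem_of_mem_erase hf
        have hfe2 := Finset.ne_of_mem_erase hf
        have : f = e₂ := by
          by_contra hne
          exact Finset.disjoint_left.mp (hMm f hfM e₂ he2M hne) hbf hb2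
        exact hfe2 this
    have hMt_missed : ∀ x, (∀ f ∈ M, x ∉ f) → x ≠ u → (∀ f ∈ Mt, x ∉ f) := by
      intro x hx hxu f hf
      rcases Finset.mem_insert.mp hf with rfl | hf
      · rw [he1eq]
        intro hmem
        rcases Finset.mem_insert.mp hmem with h | h
        · exact hxu h
        · rw [Finset.mem_singleton] at h; subst h; exact hx e₂ he2M ha2
      · exact hx f (Finset.mem_of_mem_erase hf)
    have hsdiff : N \ Mt = (N \ M).erase e₁ := by
      ext f
      rw [Finset.mem_sdiff, Finset.mem_erase, Finset.mem_sdiff]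
      constructor
      · rintro ⟨hfN, hfMt⟩
        have hfe1 : f ≠ e₁ := fun h => hfMt (h ▸ Finset.mem_insert_self e₁ (M.erase e₂))
        refine ⟨hfe1, hfN, fun hfM => ?_⟩
        have hfe2 : f ≠ e₂ := fun h => he2N (h ▸ hfN)
        exact hfMt (Finset.mem_insert_of_mem (Finset.mem_erase.mpr ⟨hfe2, hfM⟩))
      · rintro ⟨hfe1, hfN, hfM⟩
        refine ⟨hfN, fun hfMt => ?_⟩
        rcases Finset.mem_insert.mp hfMt with h | h
        · exact hfe1 h
        · exact hfM (Finset.mem_of_mem_erase h)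
    have hsdcard : (N \ Mt).card + 1 = (N \ M).card := by
      rw [hsdiff, Finset.card_erase_of_mem he1NM]
      have := Finset.card_pos.mpr ⟨e₁, he1NM⟩
      omega
    by_cases hbw : b = w
    · subst hbw
      exact Or.inl ⟨Mt, hMtE, hMt_match, by rw [hMt_card, hMc], hMt_b, hMt_missed⟩
    · by_cases hNb : ∃ f ∈ N, b ∈ f
      · have hrec := ih Mt N b hMtE hNE hMt_match hNm (by rw [hMt_card, hMc]) hNc
          (by omega) hMt_b hNb hNw
        rcases hrec with ⟨M'', h1, h2, h3, h4, h5⟩ | ⟨N', h1, h2, h3, h4, h5⟩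
        · left
          refine ⟨M'', h1, h2, h3, h4, ?_⟩
          intro x hx hxu
          have hxb : x ≠ b := fun h => hx e₂ he2M (h ▸ hb2)
          exact h5 x (hMt_missed x hx hxu) hxb
        · right
          refine ⟨N', h1, h2, h3, h4, ?_⟩
          have hsub : N' \ M ⊆ insert e₁ (N' \ Mt) := by
            intro f hf
            rw [Finset.mem_sdiff] at hf
            rw [Finset.mem_insert]
            by_cases hfe1 : f = e₁
            · exact Or.inl hfe1
            · refine Or.inr (Finset.mem_sdiff.mpr ⟨hf.1, ?_⟩)
              intro hfMt
              rcases Finset.mem_insert.mp hfMt with h | h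
              · exact hfe1 h
              · exact hf.2 (Finset.mem_of_mem_erase h)
          have h6 := Finset.card_le_card hsub
          have h7 := Finset.card_insert_le e₁ (N' \ Mt)
          omega
      · push_neg at hNb
        set N' : Finset (Finset β) := insert e₂ (N.erase e₁) with hN'def
        have he2notin : e₂ ∉ N.erase e₁ := fun h => he2N (Finset.mem_of_mem_erase h)
        have hN'E : N' ⊆ E := by
          intro f hf
          rcases Finset.mem_insert.mp hf with rfl | hf
          · exact hME he2M
          · exact hNE (Finset.mem_of_mem_erase hf)
        have hN'match : IsMatchingF N' := by
          refine isMatchingF_insert (isMatchingF_subset (Finset.erase_subset _ _) hNm) ?_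
          intro f hf
          have hfN := Finset.mem_of_mem_erase hf
          have hfe1 := Finset.ne_of_mem_erase hf
          rw [he2eq, Finset.disjoint_left]
          intro x hx
          rcases Finset.mem_insert.mp hx with rfl | hx
          · intro haf
            exact hfe1 (hNa_unique f hfN haf)
          · rw [Finset.mem_singleton] at hx; subst hx
            exact hNb f hfN
        have hNposs : 0 < N.card := Finset.card_pos.mpr ⟨e₁, he1N⟩
        have hN'card : N'.card = nuF E := by
          rw [hN'def, Finset.card_insert_of_notMem he2notin,
            Finset.card_erase_of_mem he1N, ← hNc]
          omega
        have hN'w : ∀ f ∈ N', w ∉ f := by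
          intro f hf
          rcases Finset.mem_insert.mp hf with rfl | hf
          · rw [he2eq]
            intro hmem
            rcases Finset.mem_insert.mp hmem with h | h
            · exact hNw e₁ he1N (h ▸ ha1)
            · rw [Finset.mem_singleton] at h; exact hbw h.symm
          · exact hNw f (Finset.mem_of_mem_erase hf)
        have hN'sd : N' \ M = (N \ M).erase e₁ := by
          ext f
          rw [Finset.mem_sdiff, Finset.mem_erase, Finset.mem_sdiff]
          constructor
          · rintro ⟨hf1, hf2⟩
            rcases Finset.mem_insert.mp hf1 with rfl | hf1
            · exact absurd he2M hf2
            · exact ⟨Finset.ne_of_mem_erase hf1, Finset.mem_of_mem_erase hf1, hf2⟩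
          · rintro ⟨hfe1, hfN, hfM⟩
            exact ⟨Finset.mem_insert_of_mem (Finset.mem_erase.mpr ⟨hfe1, hfN⟩), hfM⟩
        right
        refine ⟨N', hN'E, hN'match, hN'card, hN'w, ?_⟩
        rw [hN'sd, Finset.card_erase_of_mem he1NM]
        have := Finset.card_pos.mpr ⟨e₁, he1NM⟩
        omega



def adjE (E : Finset (Finset β)) (x y : β) : Prop :=
  x ≠ y ∧ ∃ e ∈ E, x ∈ e ∧ y ∈ e

def reachN (E : Finset (Finset β)) : ℕ → β → β → Prop
  | 0, x, y => x = y
  | (n+1), x, y => ∃ z, adjE E x z ∧ reachN E n z y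

lemma reachN_snoc {E : Finset (Finset β)} {k : ℕ} {u x y : β}
    (h : reachN E k u x) (h2 : adjE E x y) : reachN E (k+1) u y := by
  induction k generalizing u with
  | zero => exact ⟨y, h ▸ h2, rfl⟩
  | succ n ih =>
    obtain ⟨z, hz, hr⟩ := h
    exact ⟨z, hz, ih hr⟩

lemma reachN_zero_iff {E : Finset (Finset β)} {u v : β} : reachN E 0 u v ↔ u = v :=
  Iff.rfl

lemma reachN_succ_iff {E : Finset (Finset β)} {n : ℕ} {u v : β} :
    reachN E (n+1) u v ↔ ∃ z, adjE E u z ∧ reachN E n z v := Iff.rfl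

/-- The key graph-theoretic lemma: a graph (edges given as a finset of 2-element
finsets) with maximum degree at most `d` has at most `(d+1) ν` edges, where `ν` is
the matching number. -/
lemma key_graph (d : ℕ) : ∀ (n : ℕ) (E : Finset (Finset β)), E.card ≤ n →
    (∀ e ∈ E, e.card = 2) → (∀ v : β, (E.filter (fun e => v ∈ e)).card ≤ d) →
    E.card ≤ (d+1) * nuF E := by
  intro n
  induction n with
  | zero =>
    intro E hcard _ _
    simp only [Nat.le_zero, Finset.card_eq_zero] at hcard
    subst hcard
    simp
  | succ n ih =>
    intro E hcard hE2 hdeg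
    by_contra hcon
    push_neg at hcon
    set ν := nuF E with hνdef
    set m := E.card with hmdef
    -- Step 1 : m = (d+1)ν + 1
    have hm : m = (d+1) * ν + 1 := by
      by_contra hne
      have h2 : (d+1) * ν + 2 ≤ m := by omega
      have hEne : E.Nonempty := Finset.card_pos.mp (by omega)
      obtain ⟨e, he⟩ := hEne
      have hsub : E.erase e ⊆ E := Finset.erase_subset e E
      have h3 := ih (E.erase e) (by rw [Finset.card_erase_of_mem he]; omega)
        (fun f hf => hE2 f (hsub hf))
        (fun v => le_trans (Finset.card_le_card
          (Finset.filter_subset_filter _ hsub)) (hdeg v))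
      have h4 : nuF (E.erase e) ≤ ν := nuF_mono hsub
      rw [Finset.card_erase_of_mem he] at h3
      have := Nat.mul_le_mul_left (d+1) h4
      omega
    -- Step 2 : every vertex is avoidable by some maximum matching
    have havoid : ∀ v : β, ∃ N : Finset (Finset β), N ⊆ E ∧ IsMatchingF N ∧
        N.card = ν ∧ ∀ f ∈ N, v ∉ f := by
      intro v
      by_cases hv : ∃ e ∈ E, v ∈ e
      · set Ev := E.filter (fun e => v ∉ e) with hEvdef
        have hEvsub : Ev ⊆ E := Finset.filter_subset _ _
        have hcards : (E.filter (fun e => v ∈ e)).card + Ev.card = m := by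
          rw [hEvdef, hmdef]
          exact Finset.card_filter_add_card_filter_not _
        obtain ⟨e₀, he₀, hve₀⟩ := hv
        have he₀Ev : e₀ ∉ Ev := by
          rw [hEvdef, Finset.mem_filter]
          tauto
        have hEvlt : Ev.card < m := by
          apply Finset.card_lt_card
          exact ⟨hEvsub, fun hss => he₀Ev (hss he₀)⟩
        have h5 := ih Ev (by omega) (fun f hf => hE2 f (hEvsub hf))
          (fun w => le_trans (Finset.card_le_card
            (Finset.filter_subset_filter _ hEvsub)) (hdeg w))
        have h6 : nuF Ev ≤ ν := nuF_mono hEvsub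
        have h7 : nuF Ev = ν := by
          by_contra h8
          have h9 : nuF Ev + 1 ≤ ν := by omega
          have h10 := hdeg v
          have h12 := Nat.mul_le_mul_left (d+1) h9
          have h13 : (d+1) * (nuF Ev + 1) = (d+1) * nuF Ev + (d+1) := by ring
          omega
        obtain ⟨N, hN1, hN2, hN3⟩ := exists_nuF Ev
        refine ⟨N, hN1.trans hEvsub, hN2, by rw [hN3, h7], ?_⟩
        intro f hf
        have := hN1 hf
        rw [hEvdef, Finset.mem_filter] at this
        exact this.2
      · push_neg at hv
        obtain ⟨N, hN1, hN2, hN3⟩ := exists_nuF E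
        exact ⟨N, hN1, hN2, hN3, fun f hf => hv f (hN1 hf)⟩
    -- Step 3 : reachability between vertices of edges
    have hconn : ∀ u v : β, (∃ e ∈ E, u ∈ e) → (∃ e ∈ E, v ∈ e) →
        ∃ k, reachN E k u v := by
      intro u v hu hv
      by_contra hnr
      push_neg at hnr
      classical
      set F := E.filter (fun e => ∃ x ∈ e, ∃ k, reachN E k u x) with hFdef
      have hFsub : F ⊆ E := Finset.filter_subset _ _
      -- every vertex of an edge of F is reachable from u
      have hFall : ∀ e ∈ F, ∀ y ∈ e, ∃ k, reachN E k u y := by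
        intro e he y hy
        rw [hFdef, Finset.mem_filter] at he
        obtain ⟨x, hx, k, hk⟩ := he.2
        by_cases hxy : x = y
        · exact ⟨k, hxy ▸ hk⟩
        · exact ⟨k+1, reachN_snoc hk ⟨hxy, e, he.1, hx, hy⟩⟩
      have hFne : F.Nonempty := by
        obtain ⟨e, he, hue⟩ := hu
        exact ⟨e, by
          rw [hFdef, Finset.mem_filter]
          exact ⟨he, u, hue, 0, rfl⟩⟩
      have hFneq : F ≠ E := by
        intro hFE
        obtain ⟨e, he, hve⟩ := hv
        obtain ⟨k, hk⟩ := hFall e (hFE ▸ he) v hve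
        exact hnr k hk
      -- support disjointness between F and E \ F
      have hdisjFG : ∀ e ∈ F, ∀ f ∈ E \ F, Disjoint e f := by
        intro e he f hf
        rw [Finset.disjoint_left]
        intro x hxe hxf
        rw [Finset.mem_sdiff] at hf
        obtain ⟨k, hk⟩ := hFall e he x hxe
        exact hf.2 (by
          rw [hFdef, Finset.mem_filter]
          exact ⟨hf.1, x, hxf, k, hk⟩)
      -- ν splits
      obtain ⟨MF, hMF1, hMF2, hMF3⟩ := exists_nuF F
      obtain ⟨MG, hMG1, hMG2, hMG3⟩ := exists_nuF (E \ F)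
      have hMFG : Disjoint MF MG := by
        rw [Finset.disjoint_left]
        intro x hxF hxG
        have h1 := hMF1 hxF
        have h2 := hMG1 hxG
        rw [Finset.mem_sdiff] at h2
        exact h2.2 h1
      have hunion_match : IsMatchingF (MF ∪ MG) := by
        intro e he f hf hef
        rcases Finset.mem_union.mp he with he1 | he1 <;>
          rcases Finset.mem_union.mp hf with hf1 | hf1
        · exact hMF2 e he1 f hf1 hef
        · exact hdisjFG e (hMF1 he1) f (hMG1 hf1)
        · exact (hdisjFG f (hMF1 hf1) e (hMG1 he1)).symm
        · exact hMG2 e he1 f hf1 hef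
      have hunion_sub : MF ∪ MG ⊆ E := by
        intro f hf
        rcases Finset.mem_union.mp hf with h | h
        · exact hFsub (hMF1 h)
        · exact (Finset.sdiff_subset) (hMG1 h)
      have hge := le_nuF hunion_sub hunion_match
      rw [Finset.card_union_of_disjoint hMFG, hMF3, hMG3] at hge
      -- cards
      have hFcard : F.card + (E \ F).card = m := by
        rw [hmdef]
        rw [Finset.card_sdiff_of_subset hFsub]
        have := Finset.card_le_card hFsub
        omega
      have hFlt : F.card < m := by
        apply Finset.card_lt_card
        exact ⟨hFsub, fun h => hFneq (Finset.Subset.antisymm hFsub h)⟩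
      have hGlt : (E \ F).card < m := by
        have : 0 < F.card := Finset.card_pos.mpr hFne
        omega
      have h11 := ih F (by omega) (fun f hf => hE2 f (hFsub hf))
        (fun w => le_trans (Finset.card_le_card
          (Finset.filter_subset_filter _ hFsub)) (hdeg w))
      have h12 := ih (E \ F) (by omega) (fun f hf => hE2 f (Finset.sdiff_subset hf))
        (fun w => le_trans (Finset.card_le_card
          (Finset.filter_subset_filter _ (Finset.sdiff_subset))) (hdeg w))
      have h13 : nuF F + nuF (E \ F) ≤ ν := hge
      have h14 := Nat.mul_le_mul_left (d+1) h13
      have h15 : (d+1) * (nuF F + nuF (E \ F)) = (d+1) * nuF F + (d+1) * nuF (E \ F) := by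
        ring
      omega
    -- the support
    set V := E.biUnion (fun e => e) with hVdef
    have hmemV : ∀ x : β, x ∈ V ↔ ∃ e ∈ E, x ∈ e := by
      intro x
      rw [hVdef]
      simp [Finset.mem_biUnion]
    -- maximum matching M₀
    obtain ⟨M₀, hM₀1, hM₀2, hM₀3⟩ := exists_nuF E
    set W := M₀.biUnion (fun e => e) with hWdef
    have hWcard : W.card = 2 * ν := by
      rw [hWdef, Finset.card_biUnion (fun e he f hf hef => hM₀2 e he f hf hef)]
      rw [Finset.sum_congr rfl (fun e he => hE2 e (hM₀1 he))]
      rw [Finset.sum_const, smul_eq_mul, hM₀3]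
      ring
    have hWV : W ⊆ V := by
      intro x hx
      rw [hWdef, Finset.mem_biUnion] at hx
      obtain ⟨e, he, hxe⟩ := hx
      exact (hmemV x).mpr ⟨e, hM₀1 he, hxe⟩
    set U := V \ W with hUdef
    -- Case split on deficiency
    by_cases hUcard : U.card ≤ 1
    · -- numeric finish
      have hVcard : V.card ≤ 2 * ν + 1 := by
        have h1 : V ⊆ W ∪ U := by
          intro x hx
          rw [Finset.mem_union, hUdef, Finset.mem_sdiff]
          by_cases h : x ∈ W
          · exact Or.inl h
          · exact Or.inr ⟨hx, h⟩
        have h2 := Finset.card_le_card h1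
        have h3 := Finset.card_union_le W U
        omega
      -- double counting: sum of degrees = 2m
      have hdouble : ∑ v ∈ V, (E.filter (fun e => v ∈ e)).card = 2 * m := by
        have h1 : ∀ v, (E.filter (fun e => v ∈ e)).card = ∑ e ∈ E, if v ∈ e then 1 else 0 := by
          intro v
          rw [Finset.card_filter]
        rw [Finset.sum_congr rfl (fun v _ => h1 v)]
        rw [Finset.sum_comm]
        have h2 : ∀ e ∈ E, (∑ v ∈ V, if v ∈ e then 1 else 0) = 2 := by
          intro e he
          rw [← Finset.card_filter]
          have : V.filter (fun v => v ∈ e) = e := by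
            apply Finset.Subset.antisymm
            · intro x hx
              exact (Finset.mem_filter.mp hx).2
            · intro x hx
              exact Finset.mem_filter.mpr ⟨(hmemV x).mpr ⟨e, he, hx⟩, hx⟩
          rw [this]
          exact hE2 e he
        rw [Finset.sum_congr rfl h2, Finset.sum_const, smul_eq_mul, hmdef]
        ring
      have hdegsum : 2 * m ≤ d * V.card := by
        rw [← hdouble]
        calc ∑ v ∈ V, (E.filter (fun e => v ∈ e)).card ≤ ∑ _v ∈ V, d :=
              Finset.sum_le_sum (fun v _ => hdeg v)
          _ = d * V.card := by rw [Finset.sum_const, smul_eq_mul]; ring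
      have hbinom : 2 * m ≤ V.card * (V.card - 1) := by
        have h1 : E ⊆ V.powersetCard 2 := by
          intro e he
          rw [Finset.mem_powersetCard]
          exact ⟨fun x hx => (hmemV x).mpr ⟨e, he, hx⟩, hE2 e he⟩
        have h2 := Finset.card_le_card h1
        rw [Finset.card_powersetCard, Nat.choose_two_right] at h2
        have h3 := Nat.div_mul_le_self (V.card * (V.card - 1)) 2
        omega
      -- contradiction by arithmetic
      have hd_lb : 2 * ν + 2 ≤ d := by
        have h1 : d * V.card ≤ d * (2 * ν + 1) := Nat.mul_le_mul_left d hVcard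
        have h2 : d * (2 * ν + 1) = 2 * (d * ν) + d := by ring
        have h3 : 2 * m = 2 * (d * ν) + 2 * ν + 2 := by rw [hm]; ring
        have h4 : 2 * (d * ν) + 2 * ν + 2 ≤ 2 * (d * ν) + d := by omega
        omega
      have h5 : V.card * (V.card - 1) ≤ (2 * ν + 1) * (2 * ν) := by
        apply Nat.mul_le_mul hVcard
        omega
      have h6 : (2 * ν + 2) * ν ≤ d * ν := Nat.mul_le_mul_right ν hd_lb
      have h7 : 2 * m = 2 * (d * ν) + 2 * ν + 2 := by rw [hm]; ring
      have h8 : (2 * ν + 1) * (2 * ν) = 4 * (ν * ν) + 2 * ν := by ring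
      have h9 : (2 * ν + 2) * ν = 2 * (ν * ν) + 2 * ν := by ring
      -- 2m ≤ 4 ν² + 2ν  and  2m = 2 dν + 2ν + 2 ≥ 2(2ν²+2ν) + 2ν + 2
      have h10 : 2 * (ν * ν) + 2 * ν ≤ d * ν := h9 ▸ h6
      omega
    · -- Gallai-style contradiction
      push_neg at hUcard
      obtain ⟨u, hu, v, hv, huv⟩ := Finset.one_lt_card.mp hUcard
      have humem : ∃ e ∈ E, u ∈ e := (hmemV u).mp (Finset.mem_sdiff.mp (hUdef ▸ hu)).1
      have hvmem : ∃ e ∈ E, v ∈ e := (hmemV v).mp (Finset.mem_sdiff.mp (hUdef ▸ hv)).1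
      have humiss : ∀ f ∈ M₀, u ∉ f := by
        intro f hf hufv
        have := (Finset.mem_sdiff.mp (hUdef ▸ hu)).2
        exact this (by rw [hWdef]; exact Finset.mem_biUnion.mpr ⟨f, hf, hufv⟩)
      have hvmiss : ∀ f ∈ M₀, v ∉ f := by
        intro f hf hvfv
        have := (Finset.mem_sdiff.mp (hUdef ▸ hv)).2
        exact this (by rw [hWdef]; exact Finset.mem_biUnion.mpr ⟨f, hf, hvfv⟩)
      obtain ⟨k₀, hk₀⟩ := hconn u v humem hvmem
      classical
      set D : Set ℕ := {k | ∃ (M : Finset (Finset β)) (u' v' : β), M ⊆ E ∧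
        IsMatchingF M ∧ M.card = ν ∧ u' ≠ v' ∧ (∀ f ∈ M, u' ∉ f) ∧
        (∀ f ∈ M, v' ∉ f) ∧ reachN E k u' v'} with hDdef
      have hDne : D.Nonempty := ⟨k₀, M₀, u, v, hM₀1, hM₀2, hM₀3, huv, humiss, hvmiss, hk₀⟩
      set d₀ := sInf D with hd₀def
      obtain ⟨M, u₁, v₁, hM1, hM2, hM3, hne1, hmiss_u, hmiss_v, hreach⟩ :=
        Nat.sInf_mem hDne
      have hd₀min : ∀ k ∈ D, d₀ ≤ k := fun k hk => Nat.sInf_le hk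
      rw [← hd₀def] at hreach
      -- case analysis on d₀
      have hd₀cases : d₀ = 0 ∨ d₀ = 1 ∨ ∃ k, d₀ = k + 2 := by
        rcases Nat.lt_or_ge d₀ 2 with h | h
        · interval_cases d₀
          · exact Or.inl rfl
          · exact Or.inr (Or.inl rfl)
        · exact Or.inr (Or.inr ⟨d₀ - 2, by omega⟩)
      rcases hd₀cases with hd₀eq | hd₀eq | ⟨k, hd₀eq⟩
      · rw [hd₀eq, reachN_zero_iff] at hreach
        exact hne1 hreach
      ·
        -- adjacent missed pair : augment M
        rw [hd₀eq, reachN_succ_iff] at hreach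
        obtain ⟨z, hadj, hz⟩ := hreach
        rw [reachN_zero_iff] at hz
        have hzv : z = v₁ := hz
        rw [hzv] at hadj
        obtain ⟨hne2, e, heE, hu1e, hv1e⟩ := hadj
        have heM : e ∉ M := fun h => hmiss_u e h hu1e
        have hdisj : ∀ f ∈ M, Disjoint e f := by
          intro f hf
          obtain ⟨a, ha, heq⟩ := pair_other (hE2 e heE) hu1e
          have hav : a = v₁ := by
            rcases Finset.mem_insert.mp (heq ▸ hv1e) with h | h
            · exact absurd h.symm hne2
            · exact (Finset.mem_singleton.mp h).symm
          rw [heq, hav, Finset.disjoint_left]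
          intro x hx
          rcases Finset.mem_insert.mp hx with rfl | hx
          · exact hmiss_u f hf
          · rw [Finset.mem_singleton] at hx; subst hx; exact hmiss_v f hf
        have hins := le_nuF (E := E) (M := insert e M) (by
            intro f hf
            rcases Finset.mem_insert.mp hf with rfl | hf
            · exact heE
            · exact hM1 hf) (isMatchingF_insert hM2 hdisj)
        rw [Finset.card_insert_of_notMem heM, hM3] at hins
        omega
      · rw [hd₀eq, reachN_succ_iff] at hreach
        obtain ⟨w, hadj, hrest⟩ := hreach
        have hwu : u₁ ≠ w := hadj.1
        have hwv : w ≠ v₁ := by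
          intro h
          subst h
          have hr1 : reachN E 1 u₁ w := reachN_succ_iff.mpr ⟨w, hadj, rfl⟩
          have : (1 : ℕ) ∈ D := ⟨M, u₁, w, hM1, hM2, hM3, hwu, hmiss_u, hmiss_v, hr1⟩
          have := hd₀min 1 this
          omega
        -- choose N : max matching avoiding w, minimizing (N \ M).card
        set D2 : Set ℕ := {j | ∃ N : Finset (Finset β), N ⊆ E ∧ IsMatchingF N ∧
          N.card = ν ∧ (∀ f ∈ N, w ∉ f) ∧ (N \ M).card = j} with hD2def
        have hD2ne : D2.Nonempty := by
          obtain ⟨N, h1, h2, h3, h4⟩ := havoid w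
          exact ⟨(N \ M).card, N, h1, h2, h3, h4, rfl⟩
        obtain ⟨N, hN1, hN2, hN3, hNw, hNmin⟩ := Nat.sInf_mem hD2ne
        -- u₁ must be covered by N
        by_cases hNu : ∃ e ∈ N, u₁ ∈ e
        · -- apply the exchange lemma
          have hX := lemX E hE2 w (N \ M).card M N u₁ hM1 hN1 hM2 hN2
            (by rw [hM3]) (by rw [hN3]) le_rfl hmiss_u hNu hNw
          rcases hX with ⟨M', h1, h2, h3, h4, h5⟩ | ⟨N', h1, h2, h3, h4, h5⟩
          · -- (M', w, v₁) is a closer missed pair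
            have hv₁M' : ∀ f ∈ M', v₁ ∉ f := h5 v₁ hmiss_v (fun h => hne1 h.symm)
            have : (k+1 : ℕ) ∈ D := ⟨M', w, v₁, h1, h2, by rw [h3], hwv, h4, hv₁M',
              hrest⟩
            have := hd₀min _ this
            omega
          · -- contradicts minimality of (N \ M).card
            have : (N' \ M).card ∈ D2 := ⟨N', h1, h2, by rw [h3], h4, rfl⟩
            have h6 := Nat.sInf_le this
            rw [hNmin] at h5
            omega
        · -- (N, u₁, w) is a closer missed pair
          push_neg at hNu
          have hr1 : reachN E 1 u₁ w := reachN_succ_iff.mpr ⟨w, hadj, rfl⟩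
          have : (1 : ℕ) ∈ D := ⟨N, u₁, w, hN1, hN2, hN3, hwu, hNu, hNw, hr1⟩
          have := hd₀min 1 this
          omega

end Stmt17Aux


open Stmt17Aux

/-- Any `r`-uniform linear system (`r ≥ 2`) with `Δ ≤ 2` satisfies
`(r+1)·τ ≤ |P| + |ℒ|`. -/
theorem stmt17 {α : Type*} [DecidableEq α] (P : Finset α) (L : Finset (Finset α))
    (r : ℕ) (hr : 2 ≤ r) (hLS : IsLinearSystem P L)
    (huniform : ∀ l ∈ L, l.card = r) (hΔ : maxDegree P L ≤ 2) :
    (r + 1) * tau P L ≤ P.card + L.card := by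
  classical
  obtain ⟨hne, hsub, hlin⟩ := hLS
  have hdeg2 : ∀ p ∈ P, degree L p ≤ 2 := fun p hp => le_trans (Finset.le_sup hp) hΔ
  set D2 := P.filter (fun p => degree L p = 2) with hD2def
  set f : α → Finset (Finset α) := fun p => L.filter (fun l => p ∈ l) with hfdef
  set E := D2.image f with hEdef
  -- injectivity of f on D2
  have hinj : ∀ p ∈ D2, ∀ q ∈ D2, f p = f q → p = q := by
    intro p hp q hq hfpq
    by_contra hpq
    have hp2 : (f p).card = 2 := (Finset.mem_filter.mp hp).2
    obtain ⟨l₁, hl₁, l₂, hl₂, hl12⟩ := Finset.one_lt_card.mp (by omega : 1 < (f p).card)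
    have hl₁L : l₁ ∈ L := (Finset.mem_filter.mp hl₁).1
    have hl₂L : l₂ ∈ L := (Finset.mem_filter.mp hl₂).1
    have hpl₁ : p ∈ l₁ := (Finset.mem_filter.mp hl₁).2
    have hpl₂ : p ∈ l₂ := (Finset.mem_filter.mp hl₂).2
    have hql₁ : q ∈ l₁ := (Finset.mem_filter.mp (hfpq ▸ hl₁ : l₁ ∈ f q)).2
    have hql₂ : q ∈ l₂ := (Finset.mem_filter.mp (hfpq ▸ hl₂ : l₂ ∈ f q)).2
    have hcap := hlin l₁ hl₁L l₂ hl₂L hl12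
    have : 1 < (l₁ ∩ l₂).card := Finset.one_lt_card.mpr
      ⟨p, Finset.mem_inter.mpr ⟨hpl₁, hpl₂⟩, q, Finset.mem_inter.mpr ⟨hql₁, hql₂⟩, hpq⟩
    omega
  have hEcard : E.card = D2.card := Finset.card_image_of_injOn hinj
  -- each element of E is a 2-set
  have hE2 : ∀ e ∈ E, e.card = 2 := by
    intro e he
    obtain ⟨p, hp, rfl⟩ := Finset.mem_image.mp he
    exact (Finset.mem_filter.mp hp).2
  -- degree bound on E
  have hdegE : ∀ l : Finset α, (E.filter (fun e => l ∈ e)).card ≤ r := by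
    intro l
    by_cases hlL : l ∈ L
    · have hsub2 : E.filter (fun e => l ∈ e) ⊆ (D2.filter (fun p => p ∈ l)).image f := by
        intro e he
        rw [Finset.mem_filter] at he
        obtain ⟨p, hp, rfl⟩ := Finset.mem_image.mp he.1
        exact Finset.mem_image.mpr ⟨p, Finset.mem_filter.mpr
          ⟨hp, (Finset.mem_filter.mp he.2).2⟩, rfl⟩
      calc (E.filter (fun e => l ∈ e)).card ≤ ((D2.filter (fun p => p ∈ l)).image f).card :=
            Finset.card_le_card hsub2
        _ ≤ (D2.filter (fun p => p ∈ l)).card := Finset.card_image_le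
        _ ≤ l.card := Finset.card_le_card (fun x hx => (Finset.mem_filter.mp hx).2)
        _ = r := huniform l hlL
    · have : E.filter (fun e => l ∈ e) = ∅ := by
        rw [Finset.filter_eq_empty_iff]
        intro e he
        obtain ⟨p, hp, rfl⟩ := Finset.mem_image.mp he
        intro hle
        exact hlL (Finset.mem_filter.mp hle).1
      rw [this]
      simp
  -- apply the graph lemma
  have hkey := key_graph r E.card E le_rfl hE2 hdegE
  obtain ⟨M, hM1, hM2, hM3⟩ := exists_nuF E
  -- construct the transversal
  set Lcov := M.biUnion (fun e => e) with hLcovdef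
  have hLcovL : Lcov ⊆ L := by
    intro l hl
    rw [hLcovdef, Finset.mem_biUnion] at hl
    obtain ⟨e, he, hle⟩ := hl
    obtain ⟨p, hp, rfl⟩ := Finset.mem_image.mp (hM1 he)
    exact (Finset.mem_filter.mp hle).1
  have hLcovcard : Lcov.card = 2 * M.card := by
    rw [hLcovdef, Finset.card_biUnion (fun e he g hg heg => hM2 e he g hg heg)]
    rw [Finset.sum_congr rfl (fun e he => hE2 e (hM1 he))]
    rw [Finset.sum_const, smul_eq_mul]
    ring
  set T₁ := D2.filter (fun p => f p ∈ M) with hT₁def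
  have hT₁card : T₁.card ≤ M.card := by
    have h1 : T₁.image f ⊆ M := by
      intro e he
      obtain ⟨p, hp, rfl⟩ := Finset.mem_image.mp he
      exact (Finset.mem_filter.mp hp).2
    have h2 : T₁.card = (T₁.image f).card := by
      rw [Finset.card_image_of_injOn]
      intro p hp q hq
      exact hinj p (Finset.mem_filter.mp hp).1 q (Finset.mem_filter.mp hq).1
    rw [h2]
    exact Finset.card_le_card h1
  set Lrem := L \ Lcov with hLremdef
  have hLremcard : Lrem.card + 2 * M.card = L.card := by
    rw [hLremdef, Finset.card_sdiff_of_subset hLcovL, ← hLcovcard]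
    have := Finset.card_le_card hLcovL
    omega
  set g : {l // l ∈ Lrem} → α := fun l => (hne l.1 (Finset.mem_sdiff.mp l.2).1).choose
    with hgdef
  have hgmem : ∀ l : {l // l ∈ Lrem}, g l ∈ l.1 :=
    fun l => (hne l.1 (Finset.mem_sdiff.mp l.2).1).choose_spec
  set T₂ := Lrem.attach.image g with hT₂def
  have hT₂card : T₂.card ≤ Lrem.card := by
    calc T₂.card ≤ Lrem.attach.card := Finset.card_image_le
      _ = Lrem.card := Finset.card_attach
  set T := T₁ ∪ T₂ with hTdef
  have hTP : T ⊆ P := by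
    intro x hx
    rcases Finset.mem_union.mp hx with h | h
    · exact (Finset.mem_filter.mp ((Finset.filter_subset _ _) h : x ∈ D2)).1
    · rw [hT₂def] at h
      obtain ⟨l, _, rfl⟩ := Finset.mem_image.mp h
      exact hsub l.1 (Finset.mem_sdiff.mp l.2).1 (hgmem l)
  have hTtrans : ∀ l ∈ L, (T ∩ l).Nonempty := by
    intro l hl
    by_cases hcov : l ∈ Lcov
    · rw [hLcovdef, Finset.mem_biUnion] at hcov
      obtain ⟨e, heM, hle⟩ := hcov
      obtain ⟨p, hp, rfl⟩ := Finset.mem_image.mp (hM1 heM)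
      refine ⟨p, Finset.mem_inter.mpr ⟨?_, ?_⟩⟩
      · exact Finset.mem_union_left _ (Finset.mem_filter.mpr ⟨hp, heM⟩)
      · exact (Finset.mem_filter.mp hle).2
    · have hlrem : l ∈ Lrem := Finset.mem_sdiff.mpr ⟨hl, hcov⟩
      refine ⟨g ⟨l, hlrem⟩, Finset.mem_inter.mpr ⟨?_, hgmem ⟨l, hlrem⟩⟩⟩
      exact Finset.mem_union_right _ (Finset.mem_image.mpr
        ⟨⟨l, hlrem⟩, Finset.mem_attach _ _, rfl⟩)
  have htau : tau P L ≤ T.card := Nat.sInf_le ⟨T, ⟨hTP, hTtrans⟩, rfl⟩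
  have hTcard : T.card + M.card ≤ L.card := by
    have h0 : T.card ≤ T₁.card + T₂.card := by
      rw [hTdef]; exact Finset.card_union_le T₁ T₂
    omega
  -- double counting : r * |L| ≤ |P| + |D2|
  have hcount : r * L.card ≤ P.card + D2.card := by
    have h1 : ∀ l ∈ L, P.filter (fun p => p ∈ l) = l := by
      intro l hl
      apply Finset.Subset.antisymm
      · intro x hx
        exact (Finset.mem_filter.mp hx).2
      · intro x hx
        exact Finset.mem_filter.mpr ⟨hsub l hl hx, hx⟩
    have h2 : r * L.card = ∑ l ∈ L, l.card := by
      rw [Finset.sum_congr rfl huniform, Finset.sum_const, smul_eq_mul]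
      ring
    have h3 : ∑ l ∈ L, l.card = ∑ p ∈ P, degree L p := by
      have h4 : ∀ l ∈ L, l.card = ∑ p ∈ P, if p ∈ l then 1 else 0 := by
        intro l hl
        rw [← Finset.card_filter, h1 l hl]
      rw [Finset.sum_congr rfl h4, Finset.sum_comm]
      apply Finset.sum_congr rfl
      intro p _
      rw [← Finset.card_filter]
      rfl
    have h5 : ∑ p ∈ P, degree L p ≤ ∑ p ∈ P, (1 + if degree L p = 2 then 1 else 0) := by
      apply Finset.sum_le_sum
      intro p hp
      have := hdeg2 p hp
      by_cases h : degree L p = 2 <;> simp [h] <;> omega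
    have h6 : ∑ p ∈ P, (1 + if degree L p = 2 then 1 else 0) = P.card + D2.card := by
      rw [Finset.sum_add_distrib, Finset.sum_const, smul_eq_mul, mul_one,
        ← Finset.card_filter]
    omega
  -- final arithmetic
  have a1 : (r+1) * tau P L ≤ (r+1) * T.card := Nat.mul_le_mul_left (r+1) htau
  have a2 : (r+1) * (T.card + M.card) ≤ (r+1) * L.card :=
    Nat.mul_le_mul_left (r+1) hTcard
  have a3 : (r+1) * (T.card + M.card) = (r+1) * T.card + (r+1) * M.card := by ring
  have a4 : (r+1) * L.card = r * L.card + L.card := by ring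
  have a5 : E.card ≤ (r+1) * M.card := by rw [hM3]; exact hkey
  omega
end

section
/- Let n ≥ 3 be odd and let C_{n,n+1} = (P_n, ℒ_n) be the linear system defined as follows: P_n = (ℤ_n × (ℤ_n ∖ {0})) ∪ {p, q}, where p and q are two additional points, and ℒ_n consists of the lines L_g = {(h, g) : h ∈ ℤ_n} for each g ∈ ℤ_n ∖ {0}, the lines l_{p_g} = {(g, h) : h ∈ ℤ_n ∖ {0}} ∪ {p} for each g ∈ ℤ_n, and the lines l_{q_g} = {(h, h+g) : h ∈ ℤ_n, h+g ≠ 0} ∪ {q} for each g ∈ ℤ_n. Then C_{n,n+1} is an n-uniform linear system and its transversal number and 2-packing number satisfy τ(C_{n,n+1}) = ν₂(C_{n,n+1}) = n + 1. -/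
open Finset

/-- The point type of the linear system `C_{n,n+1}`: pairs in `ℤ_n × ℤ_n`
together with two extra points `p = Sum.inr 0` and `q = Sum.inr 1`. -/
abbrev CPt (n : ℕ) := (ZMod n × ZMod n) ⊕ Fin 2

/-- The point set `P_n = (ℤ_n × (ℤ_n \ {0})) ∪ {p, q}`. -/
def CPoints (n : ℕ) [NeZero n] : Finset (CPt n) :=
  ((Finset.univ.filter fun x : ZMod n × ZMod n => x.2 ≠ 0).image Sum.inl) ∪
    {Sum.inr 0, Sum.inr 1}

/-- The line `L_g = {(h, g) : h ∈ ℤ_n}`, for `g ≠ 0`. -/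
def Lg (n : ℕ) [NeZero n] (g : ZMod n) : Finset (CPt n) :=
  Finset.univ.image fun h : ZMod n => (Sum.inl (h, g) : CPt n)

/-- The line `l_{p_g} = {(g, h) : h ∈ ℤ_n \ {0}} ∪ {p}`. -/
def lineP (n : ℕ) [NeZero n] (g : ZMod n) : Finset (CPt n) :=
  ((Finset.univ.filter fun h : ZMod n => h ≠ 0).image fun h => (Sum.inl (g, h) : CPt n)) ∪
    {Sum.inr 0}

/-- The line `l_{q_g} = {(h, h + g) : h ∈ ℤ_n, h + g ≠ 0} ∪ {q}`. -/
def lineQ (n : ℕ) [NeZero n] (g : ZMod n) : Finset (CPt n) :=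
  ((Finset.univ.filter fun h : ZMod n => h + g ≠ 0).image fun h => (Sum.inl (h, h + g) : CPt n)) ∪
    {Sum.inr 1}

/-- The line set `ℒ_n = {L_g : g ≠ 0} ∪ {l_{p_g} : g ∈ ℤ_n} ∪ {l_{q_g} : g ∈ ℤ_n}`. -/
def CLines (n : ℕ) [NeZero n] : Finset (Finset (CPt n)) :=
  ((Finset.univ.filter fun g : ZMod n => g ≠ 0).image (Lg n)) ∪
    (Finset.univ.image (lineP n)) ∪ (Finset.univ.image (lineQ n))


section Helpers
variable {n : ℕ} [NeZero n]

lemma inl_mem_Lg {a b g : ZMod n} : (Sum.inl (a, b) : CPt n) ∈ Lg n g ↔ b = g := by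
  simp [Lg, Prod.ext_iff, eq_comm]

lemma inr_notMem_Lg {i : Fin 2} {g : ZMod n} : (Sum.inr i : CPt n) ∉ Lg n g := by
  simp [Lg]

lemma inl_mem_lineP {a b g : ZMod n} :
    (Sum.inl (a, b) : CPt n) ∈ lineP n g ↔ a = g ∧ b ≠ 0 := by
  simp [lineP, Prod.ext_iff]
  aesop

lemma inr_mem_lineP {i : Fin 2} {g : ZMod n} : (Sum.inr i : CPt n) ∈ lineP n g ↔ i = 0 := by
  simp [lineP]

lemma inl_mem_lineQ {a b g : ZMod n} :
    (Sum.inl (a, b) : CPt n) ∈ lineQ n g ↔ b = a + g ∧ b ≠ 0 := by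
  simp [lineQ, Prod.ext_iff]
  aesop

lemma inr_mem_lineQ {i : Fin 2} {g : ZMod n} : (Sum.inr i : CPt n) ∈ lineQ n g ↔ i = 1 := by
  simp [lineQ]

end Helpers

section Helpers2
variable {n : ℕ} [NeZero n]

lemma filter_ne_card : ((univ : Finset (ZMod n)).filter (· ≠ 0)).card = n - 1 := by
  rw [Finset.filter_ne', Finset.card_erase_of_mem (mem_univ _)]
  simp [ZMod.card]

lemma Lg_card {g : ZMod n} : (Lg n g).card = n := by
  rw [Lg, Finset.card_image_of_injective _ (fun a b h => by simpa using h)]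
  simp [ZMod.card]

lemma lineP_card {g : ZMod n} : (lineP n g).card = n := by
  rw [lineP, Finset.card_union_of_disjoint (by simp)]
  rw [Finset.card_image_of_injective _ (fun a b h => by simpa using h)]
  simp only [filter_ne_card, card_singleton]
  have := NeZero.pos n; omega

lemma lineQ_card {g : ZMod n} : (lineQ n g).card = n := by
  rw [lineQ, Finset.card_union_of_disjoint (by simp)]
  rw [Finset.card_image_of_injOn (fun a _ b _ h => by simpa [Prod.ext_iff] using h)]
  have : (univ.filter fun h : ZMod n => h + g ≠ 0) = univ.erase (-g) := by
    ext x; simp [sub_eq_iff_eq_add, eq_comm, ← eq_neg_iff_add_eq_zero]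
  rw [this, Finset.card_erase_of_mem (mem_univ _), card_singleton]
  have := NeZero.pos n; simp [ZMod.card]; omega

lemma mem_CLines {l : Finset (CPt n)} :
    l ∈ CLines n ↔ (∃ g, g ≠ 0 ∧ l = Lg n g) ∨ (∃ g, l = lineP n g) ∨ ∃ g, l = lineQ n g := by
  simp [CLines, or_assoc, eq_comm]

lemma Lg_mem_CLines {g : ZMod n} (hg : g ≠ 0) : Lg n g ∈ CLines n :=
  mem_CLines.2 (Or.inl ⟨g, hg, rfl⟩)

lemma lineP_mem_CLines (g : ZMod n) : lineP n g ∈ CLines n :=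
  mem_CLines.2 (Or.inr (Or.inl ⟨g, rfl⟩))

lemma lineQ_mem_CLines (g : ZMod n) : lineQ n g ∈ CLines n :=
  mem_CLines.2 (Or.inr (Or.inr ⟨g, rfl⟩))

end Helpers2

section Helpers3
variable {n : ℕ} [NeZero n]

lemma Lg_injective : Function.Injective (Lg n) := fun g g' h => by
  have : (Sum.inl (0, g) : CPt n) ∈ Lg n g' := h ▸ inl_mem_Lg.2 rfl
  exact (inl_mem_Lg.1 this).symm ▸ rfl

lemma lineP_injective (hn : 3 ≤ n) : Function.Injective (lineP (n := n)) := fun g g' h => by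
  haveI : Fact (1 < n) := ⟨by omega⟩
  have : (Sum.inl (g, 1) : CPt n) ∈ lineP n g' := h ▸ inl_mem_lineP.2 ⟨rfl, one_ne_zero⟩
  exact (inl_mem_lineP.1 this).1

lemma lineQ_injective (hn : 3 ≤ n) : Function.Injective (lineQ (n := n)) := fun g g' h => by
  haveI : Fact (1 < n) := ⟨by omega⟩
  have h1 : (Sum.inl (1 - g, 1) : CPt n) ∈ lineQ n g := by
    rw [inl_mem_lineQ]; constructor; ring; exact one_ne_zero
  rw [h] at h1
  have := (inl_mem_lineQ.1 h1).1
  linear_combination this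

lemma Lg_ne_lineP {g x : ZMod n} : Lg n g ≠ lineP n x := fun h => by
  have : (Sum.inr 0 : CPt n) ∈ lineP n x := inr_mem_lineP.2 rfl
  exact inr_notMem_Lg (h ▸ this)

lemma Lg_ne_lineQ {g x : ZMod n} : Lg n g ≠ lineQ n x := fun h => by
  have : (Sum.inr 1 : CPt n) ∈ lineQ n x := inr_mem_lineQ.2 rfl
  exact inr_notMem_Lg (h ▸ this)

lemma lineP_ne_lineQ {g x : ZMod n} : lineP n g ≠ lineQ n x := fun h => by
  have : (Sum.inr 0 : CPt n) ∈ lineP n g := inr_mem_lineP.2 rfl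
  rw [h, inr_mem_lineQ] at this
  exact absurd this (by decide)

-- intersection lemmas
lemma pair_LL {g g' : ZMod n} (h : g ≠ g') : (Lg n g ∩ Lg n g').card ≤ 1 := by
  apply Finset.card_le_one.2
  rintro (⟨a1,a2⟩|i) ha b hb <;> simp [inl_mem_Lg, inr_notMem_Lg] at ha
  exact absurd (ha.1.symm.trans ha.2) h

lemma pair_LP {g x : ZMod n} : (Lg n g ∩ lineP n x).card ≤ 1 := by
  apply Finset.card_le_one.2
  have key : ∀ a ∈ Lg n g ∩ lineP n x, a = Sum.inl (x, g) := by
    rintro (⟨a1,a2⟩|i) ha <;>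
      simp only [mem_inter, inl_mem_Lg, inr_notMem_Lg, inl_mem_lineP, inr_mem_lineP,
        false_and, and_false] at ha
    obtain ⟨rfl, rfl, _⟩ := ha; rfl
  exact fun a ha b hb => (key a ha).trans (key b hb).symm

lemma pair_LQ {g d : ZMod n} : (Lg n g ∩ lineQ n d).card ≤ 1 := by
  apply Finset.card_le_one.2
  have key : ∀ a ∈ Lg n g ∩ lineQ n d, a = Sum.inl (g - d, g) := by
    rintro (⟨a1,a2⟩|i) ha <;>
      simp only [mem_inter, inl_mem_Lg, inr_notMem_Lg, inl_mem_lineQ, inr_mem_lineQ] at ha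
    · obtain ⟨rfl, h2, _⟩ := ha
      simp only [Sum.inl.injEq, Prod.mk.injEq, and_true]
      linear_combination -h2
    · simp at ha
  exact fun a ha b hb => (key a ha).trans (key b hb).symm

lemma pair_PP {x x' : ZMod n} (h : x ≠ x') : (lineP n x ∩ lineP n x').card ≤ 1 := by
  apply Finset.card_le_one.2
  have key : ∀ a ∈ lineP n x ∩ lineP n x', a = Sum.inr 0 := by
    rintro (⟨a1,a2⟩|i) ha <;>
      simp only [mem_inter, inl_mem_lineP, inr_mem_lineP] at ha
    · exact absurd (ha.1.1.symm.trans ha.2.1) h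
    · rw [ha.1]
  exact fun a ha b hb => (key a ha).trans (key b hb).symm

lemma pair_QQ {d d' : ZMod n} (h : d ≠ d') : (lineQ n d ∩ lineQ n d').card ≤ 1 := by
  apply Finset.card_le_one.2
  have key : ∀ a ∈ lineQ n d ∩ lineQ n d', a = Sum.inr 1 := by
    rintro (⟨a1,a2⟩|i) ha <;>
      simp only [mem_inter, inl_mem_lineQ, inr_mem_lineQ] at ha
    · exact absurd (by linear_combination ha.2.1 - ha.1.1 : d = d') h
    · rw [ha.1]
  exact fun a ha b hb => (key a ha).trans (key b hb).symm

lemma pair_PQ {x d : ZMod n} : (lineP n x ∩ lineQ n d).card ≤ 1 := by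
  apply Finset.card_le_one.2
  have key : ∀ a ∈ lineP n x ∩ lineQ n d, a = Sum.inl (x, x + d) := by
    rintro (⟨a1,a2⟩|i) ha <;>
      simp only [mem_inter, inl_mem_lineP, inr_mem_lineP, inl_mem_lineQ, inr_mem_lineQ] at ha
    · obtain ⟨⟨rfl, _⟩, rfl, _⟩ := ha; rfl
    · exact absurd (ha.1 ▸ ha.2) (by decide)
  exact fun a ha b hb => (key a ha).trans (key b hb).symm

end Helpers3

section Helpers4
variable {n : ℕ} [NeZero n]

lemma inl_mem_CPoints {a b : ZMod n} : (Sum.inl (a, b) : CPt n) ∈ CPoints n ↔ b ≠ 0 := by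
  simp [CPoints]

lemma inr_mem_CPoints {i : Fin 2} : (Sum.inr i : CPt n) ∈ CPoints n := by
  fin_cases i <;> simp [CPoints]

lemma CLines_sub : ∀ l ∈ CLines n, l ⊆ CPoints n := by
  intro l hl
  rcases mem_CLines.1 hl with ⟨g, hg, rfl⟩ | ⟨g, rfl⟩ | ⟨g, rfl⟩ <;>
    rintro (⟨a1, a2⟩ | i) ha
  · rw [inl_mem_Lg] at ha; rw [inl_mem_CPoints, ha]; exact hg
  · exact absurd ha inr_notMem_Lg
  · exact inl_mem_CPoints.2 (inl_mem_lineP.1 ha).2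
  · exact inr_mem_CPoints
  · exact inl_mem_CPoints.2 (inl_mem_lineQ.1 ha).2
  · exact inr_mem_CPoints

lemma isLS (hn : 3 ≤ n) : IsLinearSystem (CPoints n) (CLines n) := by
  refine ⟨fun l hl => ?_, CLines_sub, fun l hl l' hl' hne => ?_⟩
  · have : l.card = n := by
      rcases mem_CLines.1 hl with ⟨g, _, rfl⟩ | ⟨g, rfl⟩ | ⟨g, rfl⟩
      exacts [Lg_card, lineP_card, lineQ_card]
    exact Finset.card_pos.1 (by omega)
  · rcases mem_CLines.1 hl with ⟨g, hg, rfl⟩ | ⟨g, rfl⟩ | ⟨g, rfl⟩ <;>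
      rcases mem_CLines.1 hl' with ⟨g', hg', rfl⟩ | ⟨g', rfl⟩ | ⟨g', rfl⟩
    · exact pair_LL (fun h => hne (h ▸ rfl))
    · exact pair_LP
    · exact pair_LQ
    · rw [inter_comm]; exact pair_LP
    · exact pair_PP (fun h => hne (h ▸ rfl))
    · exact pair_PQ
    · rw [inter_comm]; exact pair_LQ
    · rw [inter_comm]; exact pair_PQ
    · exact pair_QQ (fun h => hne (h ▸ rfl))

end Helpers4

section Helpers5
variable {n : ℕ} [NeZero n]

lemma two_unit (hodd : Odd n) : IsUnit (2 : ZMod n) := by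
  have : IsUnit ((2 : ℕ) : ZMod n) := by
    rw [ZMod.isUnit_iff_coprime]
    rcases hodd with ⟨k, rfl⟩
    simp [Nat.coprime_comm, Nat.Coprime, Nat.succ_sub_one, Nat.add_mul_mod_self_left]
  simpa using this

lemma sum_univ_zmod (hodd : Odd n) : ∑ x : ZMod n, x = 0 := by
  have h : ∑ x : ZMod n, -x = ∑ x : ZMod n, x :=
    Fintype.sum_bijective _ neg_involutive.bijective _ _ (fun x => rfl)
  rw [Finset.sum_neg_distrib] at h
  have h2 : (2 : ZMod n) * (∑ x : ZMod n, x) = 2 * 0 := by ring_nf; linear_combination -h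
  exact (two_unit hodd).mul_left_cancel h2

lemma sum_nonzero_zmod (hodd : Odd n) :
    ∑ x ∈ (univ : Finset (ZMod n)).erase 0, x = 0 := by
  have h := Finset.add_sum_erase (univ : Finset (ZMod n)) (fun x => x) (mem_univ 0)
  rw [zero_add] at h
  rw [h, sum_univ_zmod hodd]

end Helpers5

section Tau
variable {n : ℕ} [NeZero n]

lemma transversal_card (hn : 3 ≤ n) (hodd : Odd n) {T : Finset (CPt n)}
    (hT : IsTransversal (CPoints n) (CLines n) T) : n + 1 ≤ T.card := by
  obtain ⟨hTP, hTL⟩ := hT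
  set G : Finset (ZMod n × ZMod n) := univ.filter (fun x => (Sum.inl x : CPt n) ∈ T) with hGdef
  have hGmem : ∀ x : ZMod n × ZMod n, x ∈ G ↔ Sum.inl x ∈ T := by
    intro x; simp [hGdef]
  have hGsub : G.image (Sum.inl : _ → CPt n) ⊆ T := by
    intro a ha
    obtain ⟨x, hx, rfl⟩ := Finset.mem_image.1 ha
    exact (hGmem x).1 hx
  have hGicard : (G.image (Sum.inl : _ → CPt n)).card = G.card :=
    Finset.card_image_of_injective _ Sum.inl_injective
  have hD : ∀ a ∈ G, a.2 ≠ 0 := by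
    rintro ⟨a1, a2⟩ ha
    exact inl_mem_CPoints.1 (hTP ((hGmem _).1 ha))
  have hC : ∀ g : ZMod n, g ≠ 0 → ∃ a ∈ G, a.2 = g := by
    intro g hg
    obtain ⟨a, ha⟩ := hTL (Lg n g) (Lg_mem_CLines hg)
    rw [mem_inter] at ha
    rcases a with ⟨a1, a2⟩ | i
    · exact ⟨(a1, a2), (hGmem _).2 ha.1, inl_mem_Lg.1 ha.2⟩
    · exact absurd ha.2 inr_notMem_Lg
  have hGcard1 : n - 1 ≤ G.card := by
    have hsub : (univ : Finset (ZMod n)).erase 0 ⊆ G.image Prod.snd := by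
      intro g hg
      obtain ⟨a, ha, ha2⟩ := hC g (Finset.mem_erase.1 hg).1
      exact Finset.mem_image.2 ⟨a, ha, ha2⟩
    calc n - 1 = ((univ : Finset (ZMod n)).erase 0).card := by
          rw [Finset.card_erase_of_mem (mem_univ _)]; simp [ZMod.card]
      _ ≤ (G.image Prod.snd).card := card_le_card hsub
      _ ≤ G.card := Finset.card_image_le
  by_cases hp : (Sum.inr 0 : CPt n) ∈ T <;> by_cases hq : (Sum.inr 1 : CPt n) ∈ T
  · -- both
    have hsub : G.image (Sum.inl : _ → CPt n) ∪ {Sum.inr 0, Sum.inr 1} ⊆ T := by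
      intro a ha
      rcases Finset.mem_union.1 ha with h | h
      · exact hGsub h
      · rcases Finset.mem_insert.1 h with rfl | h
        · exact hp
        · rw [Finset.mem_singleton.1 h]; exact hq
    have := card_le_card hsub
    rw [Finset.card_union_of_disjoint (by simp), hGicard] at this
    have h2 : ({Sum.inr 0, Sum.inr 1} : Finset (CPt n)).card = 2 := by
      rw [Finset.card_insert_of_notMem (by simp), card_singleton]
    omega
  · -- p only : q ∉ T, use diagonals
    have hB : ∀ d : ZMod n, ∃ a ∈ G, a.2 - a.1 = d := by
      intro d
      obtain ⟨a, ha⟩ := hTL (lineQ n d) (lineQ_mem_CLines d)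
      rw [mem_inter] at ha
      rcases a with ⟨a1, a2⟩ | i
      · obtain ⟨h1, _⟩ := inl_mem_lineQ.1 ha.2
        exact ⟨(a1, a2), (hGmem _).2 ha.1, by rw [h1]; ring⟩
      · rw [inr_mem_lineQ.1 ha.2] at ha; exact absurd ha.1 hq
    have hGn : n ≤ G.card := by
      have hsub : (univ : Finset (ZMod n)) ⊆ G.image (fun a => a.2 - a.1) := by
        intro d _
        obtain ⟨a, ha, ha2⟩ := hB d
        exact Finset.mem_image.2 ⟨a, ha, ha2⟩
      calc n = (univ : Finset (ZMod n)).card := by simp [ZMod.card]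
        _ ≤ _ := card_le_card hsub
        _ ≤ G.card := Finset.card_image_le
    have hsub : G.image (Sum.inl : _ → CPt n) ∪ {Sum.inr 0} ⊆ T := by
      intro a ha
      rcases Finset.mem_union.1 ha with h | h
      · exact hGsub h
      · rw [Finset.mem_singleton.1 h]; exact hp
    have := card_le_card hsub
    rw [Finset.card_union_of_disjoint (by simp), hGicard, card_singleton] at this
    omega
  · -- q only : p ∉ T, use verticals
    have hA : ∀ x : ZMod n, ∃ a ∈ G, a.1 = x := by
      intro x
      obtain ⟨a, ha⟩ := hTL (lineP n x) (lineP_mem_CLines x)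
      rw [mem_inter] at ha
      rcases a with ⟨a1, a2⟩ | i
      · exact ⟨(a1, a2), (hGmem _).2 ha.1, (inl_mem_lineP.1 ha.2).1⟩
      · rw [inr_mem_lineP.1 ha.2] at ha; exact absurd ha.1 hp
    have hGn : n ≤ G.card := by
      have hsub : (univ : Finset (ZMod n)) ⊆ G.image Prod.fst := by
        intro x _
        obtain ⟨a, ha, ha2⟩ := hA x
        exact Finset.mem_image.2 ⟨a, ha, ha2⟩
      calc n = (univ : Finset (ZMod n)).card := by simp [ZMod.card]
        _ ≤ _ := card_le_card hsub
        _ ≤ G.card := Finset.card_image_le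
    have hsub : G.image (Sum.inl : _ → CPt n) ∪ {Sum.inr 1} ⊆ T := by
      intro a ha
      rcases Finset.mem_union.1 ha with h | h
      · exact hGsub h
      · rw [Finset.mem_singleton.1 h]; exact hq
    have := card_le_card hsub
    rw [Finset.card_union_of_disjoint (by simp), hGicard, card_singleton] at this
    omega
  · -- neither
    have hA : ∀ x : ZMod n, ∃ a ∈ G, a.1 = x := by
      intro x
      obtain ⟨a, ha⟩ := hTL (lineP n x) (lineP_mem_CLines x)
      rw [mem_inter] at ha
      rcases a with ⟨a1, a2⟩ | i
      · exact ⟨(a1, a2), (hGmem _).2 ha.1, (inl_mem_lineP.1 ha.2).1⟩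
      · rw [inr_mem_lineP.1 ha.2] at ha; exact absurd ha.1 hp
    have hB : ∀ d : ZMod n, ∃ a ∈ G, a.2 - a.1 = d := by
      intro d
      obtain ⟨a, ha⟩ := hTL (lineQ n d) (lineQ_mem_CLines d)
      rw [mem_inter] at ha
      rcases a with ⟨a1, a2⟩ | i
      · obtain ⟨h1, _⟩ := inl_mem_lineQ.1 ha.2
        exact ⟨(a1, a2), (hGmem _).2 ha.1, by rw [h1]; ring⟩
      · rw [inr_mem_lineQ.1 ha.2] at ha; exact absurd ha.1 hq
    have key : n + 1 ≤ G.card := by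
      by_contra hcon
      push_neg at hcon
      have h1 : G.image Prod.fst = univ := by
        apply subset_antisymm (subset_univ _)
        intro x _
        obtain ⟨a, ha, h⟩ := hA x
        exact Finset.mem_image.2 ⟨a, ha, h⟩
      have h2 : G.image (fun a : ZMod n × ZMod n => a.2 - a.1) = univ := by
        apply subset_antisymm (subset_univ _)
        intro d _
        obtain ⟨a, ha, h⟩ := hB d
        exact Finset.mem_image.2 ⟨a, ha, h⟩
      have hGn : G.card = n := by
        have hineq : (G.image Prod.fst).card ≤ G.card := Finset.card_image_le
        rw [h1] at hineq
        simp only [Finset.card_univ, ZMod.card] at hineq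
        omega
      have hinj1 : ∀ x ∈ G, ∀ y ∈ G, x.1 = y.1 → x = y := by
        have hci : (G.image Prod.fst).card = G.card := by
          rw [h1, hGn]; simp [ZMod.card]
        have := Finset.card_image_iff.1 hci
        exact fun x hx y hy h => this (Finset.mem_coe.2 hx) (Finset.mem_coe.2 hy) h
      have hinj2 : ∀ x ∈ G, ∀ y ∈ G, x.2 - x.1 = y.2 - y.1 → x = y := by
        have hci : (G.image (fun a : ZMod n × ZMod n => a.2 - a.1)).card = G.card := by
          rw [h2, hGn]; simp [ZMod.card]
        have := Finset.card_image_iff.1 hci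
        exact fun x hx y hy h => this (Finset.mem_coe.2 hx) (Finset.mem_coe.2 hy) h
      have hs1 : ∑ a ∈ G, a.1 = 0 := by
        calc ∑ a ∈ G, a.1 = ∑ x ∈ G.image Prod.fst, x := (Finset.sum_image (f := id) (g := Prod.fst) hinj1).symm
          _ = 0 := by rw [h1]; exact sum_univ_zmod hodd
      have hs2 : ∑ a ∈ G, (a.2 - a.1) = 0 := by
        calc ∑ a ∈ G, (a.2 - a.1)
            = ∑ x ∈ G.image (fun a : ZMod n × ZMod n => a.2 - a.1), x :=
              (Finset.sum_image (f := id) (g := fun a : ZMod n × ZMod n => a.2 - a.1) hinj2).symm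
          _ = 0 := by rw [h2]; exact sum_univ_zmod hodd
      have hs3 : ∑ a ∈ G, a.2 = 0 := by
        have heq : ∑ a ∈ G, a.2 = ∑ a ∈ G, (a.1 + (a.2 - a.1)) := by
          apply Finset.sum_congr rfl; intros; ring
        rw [heq, Finset.sum_add_distrib, hs1, hs2, add_zero]
      have hmaps : ∀ a ∈ G, a.2 ∈ (univ : Finset (ZMod n)).erase 0 :=
        fun a ha => Finset.mem_erase.2 ⟨hD a ha, mem_univ _⟩
      have hcard : ((univ : Finset (ZMod n)).erase 0).card < G.card := by
        rw [Finset.card_erase_of_mem (mem_univ _), hGn]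
        simp only [Finset.card_univ, ZMod.card]
        omega
      obtain ⟨u, hu, v, hv, huv, he⟩ :=
        Finset.exists_ne_map_eq_of_card_lt_of_maps_to hcard hmaps
      have hG'card : (G.erase u).card = n - 1 := by
        rw [Finset.card_erase_of_mem hu, hGn]
      have himg : (G.erase u).image Prod.snd = (univ : Finset (ZMod n)).erase 0 := by
        apply subset_antisymm
        · intro g hg
          obtain ⟨a, ha, rfl⟩ := Finset.mem_image.1 hg
          exact hmaps a (Finset.mem_of_mem_erase ha)
        · intro g hg
          obtain ⟨a, ha, ha2⟩ := hC g (Finset.mem_erase.1 hg).1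
          by_cases hau : a = u
          · exact Finset.mem_image.2 ⟨v, Finset.mem_erase.2 ⟨huv.symm, hv⟩,
              by rw [← he, ← hau]; exact ha2⟩
          · exact Finset.mem_image.2 ⟨a, Finset.mem_erase.2 ⟨hau, ha⟩, ha2⟩
      have hinj3 : ∀ x ∈ G.erase u, ∀ y ∈ G.erase u, x.2 = y.2 → x = y := by
        have hcardi : ((G.erase u).image Prod.snd).card = (G.erase u).card := by
          rw [himg, hG'card, Finset.card_erase_of_mem (mem_univ _)]
          simp [ZMod.card]
        have := Finset.card_image_iff.1 hcardi
        exact fun x hx y hy h => this (Finset.mem_coe.2 hx) (Finset.mem_coe.2 hy) h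
      have hs4 : ∑ a ∈ G.erase u, a.2 = 0 := by
        calc ∑ a ∈ G.erase u, a.2 = ∑ x ∈ (G.erase u).image Prod.snd, x :=
              (Finset.sum_image (f := id) (g := Prod.snd) hinj3).symm
          _ = 0 := by rw [himg]; exact sum_nonzero_zmod hodd
      have hs5 := Finset.add_sum_erase G (fun a => a.2) hu
      rw [hs4, hs3, add_zero] at hs5
      exact hD u hu hs5
    have := card_le_card hGsub
    omega

end Tau

section TauEq
variable {n : ℕ} [NeZero n]

lemma tau_eq (hn : 3 ≤ n) (hodd : Odd n) : tau (CPoints n) (CLines n) = n + 1 := by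
  classical
  set T0 : Finset (CPt n) :=
    ((univ.erase (0 : ZMod n)).image fun g => (Sum.inl (0, g) : CPt n)) ∪
      {Sum.inr 0, Sum.inr 1} with hT0
  have hT0trans : IsTransversal (CPoints n) (CLines n) T0 := by
    constructor
    · intro a ha
      rw [hT0, Finset.mem_union] at ha
      rcases ha with h | h
      · obtain ⟨g, hg, rfl⟩ := Finset.mem_image.1 h
        exact inl_mem_CPoints.2 (Finset.mem_erase.1 hg).1
      · rcases Finset.mem_insert.1 h with rfl | h
        · exact inr_mem_CPoints
        · rw [Finset.mem_singleton.1 h]; exact inr_mem_CPoints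
    · intro l hl
      rcases mem_CLines.1 hl with ⟨g, hg, rfl⟩ | ⟨g, rfl⟩ | ⟨g, rfl⟩
      · exact ⟨Sum.inl (0, g), Finset.mem_inter.2 ⟨Finset.mem_union_left _
          (Finset.mem_image.2 ⟨g, Finset.mem_erase.2 ⟨hg, mem_univ _⟩, rfl⟩),
          inl_mem_Lg.2 rfl⟩⟩
      · exact ⟨Sum.inr 0, Finset.mem_inter.2 ⟨Finset.mem_union_right _ (by simp),
          inr_mem_lineP.2 rfl⟩⟩
      · exact ⟨Sum.inr 1, Finset.mem_inter.2 ⟨Finset.mem_union_right _ (by simp),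
          inr_mem_lineQ.2 rfl⟩⟩
  have hT0card : T0.card = n + 1 := by
    rw [hT0, Finset.card_union_of_disjoint (by simp),
      Finset.card_image_of_injective _ (fun a b h => by simpa using h),
      Finset.card_erase_of_mem (mem_univ _),
      Finset.card_insert_of_notMem (by simp), card_singleton]
    simp only [Finset.card_univ, ZMod.card]
    omega
  unfold tau
  apply le_antisymm
  · exact Nat.sInf_le (Set.mem_setOf.2 ⟨T0, hT0trans, hT0card⟩)
  · apply le_csInf ⟨n + 1, Set.mem_setOf.2 ⟨T0, hT0trans, hT0card⟩⟩
    rintro m ⟨T, hT, rfl⟩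
    exact transversal_card hn hodd hT

end TauEq

section Nu2
variable {n : ℕ} [NeZero n]

lemma memLg_memLg {a : CPt n} {g g' : ZMod n} (h1 : a ∈ Lg n g) (h2 : a ∈ Lg n g') :
    g = g' := by
  rcases a with ⟨a1, a2⟩ | i
  · rw [inl_mem_Lg] at h1 h2; rw [← h1, ← h2]
  · exact absurd h1 inr_notMem_Lg

lemma memP0_memQ0 {a : CPt n} (h1 : a ∈ lineP n 0) (h2 : a ∈ lineQ n 0) : False := by
  rcases a with ⟨a1, a2⟩ | i
  · rw [inl_mem_lineP] at h1; rw [inl_mem_lineQ] at h2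
    exact h1.2 (by rw [h2.1, h1.1]; ring)
  · rw [inr_mem_lineP] at h1; rw [inr_mem_lineQ] at h2
    rw [h1] at h2; exact absurd h2 (by decide)

lemma packing_lb (hn : 3 ≤ n) :
    ∃ R : Finset (Finset (CPt n)), Is2Packing (CLines n) R ∧ R.card = n + 1 := by
  classical
  refine ⟨((univ.erase (0 : ZMod n)).image (Lg n)) ∪ {lineP n 0, lineQ n 0}, ⟨?_, ?_⟩, ?_⟩
  · intro l hl
    rcases Finset.mem_union.1 hl with h | h
    · obtain ⟨g, hg, rfl⟩ := Finset.mem_image.1 h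
      exact Lg_mem_CLines (Finset.mem_erase.1 hg).1
    · rcases Finset.mem_insert.1 h with rfl | h
      · exact lineP_mem_CLines 0
      · rw [Finset.mem_singleton.1 h]; exact lineQ_mem_CLines 0
  · have hmem : ∀ l : Finset (CPt n),
        l ∈ ((univ.erase (0 : ZMod n)).image (Lg n)) ∪ {lineP n 0, lineQ n 0} →
        (∃ g, l = Lg n g) ∨ l = lineP n 0 ∨ l = lineQ n 0 := by
      intro l hl
      rcases Finset.mem_union.1 hl with h | h
      · obtain ⟨g, _, rfl⟩ := Finset.mem_image.1 h; exact Or.inl ⟨g, rfl⟩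
      · rcases Finset.mem_insert.1 h with rfl | h
        · exact Or.inr (Or.inl rfl)
        · exact Or.inr (Or.inr (Finset.mem_singleton.1 h))
    intro l1 hl1 l2 hl2 l3 hl3 h12 h13 h23
    rw [Finset.eq_empty_iff_forall_notMem]
    intro a ha
    rw [Finset.mem_inter, Finset.mem_inter] at ha
    obtain ⟨⟨ha1, ha2⟩, ha3⟩ := ha
    rcases hmem l1 hl1 with ⟨g1, rfl⟩ | rfl | rfl <;>
      rcases hmem l2 hl2 with ⟨g2, rfl⟩ | rfl | rfl <;>
      rcases hmem l3 hl3 with ⟨g3, rfl⟩ | rfl | rfl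
    · exact h12 (by rw [memLg_memLg ha1 ha2])
    · exact h12 (by rw [memLg_memLg ha1 ha2])
    · exact h12 (by rw [memLg_memLg ha1 ha2])
    · exact h13 (by rw [memLg_memLg ha1 ha3])
    · exact h23 rfl
    · exact memP0_memQ0 ha2 ha3
    · exact h13 (by rw [memLg_memLg ha1 ha3])
    · exact memP0_memQ0 ha3 ha2
    · exact h23 rfl
    · exact h23 (by rw [memLg_memLg ha2 ha3])
    · exact h13 rfl
    · exact memP0_memQ0 ha1 ha3
    · exact h12 rfl
    · exact h12 rfl
    · exact h12 rfl
    · exact memP0_memQ0 ha1 ha2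
    · exact memP0_memQ0 ha1 ha2
    · exact h23 rfl
    · exact h23 (by rw [memLg_memLg ha2 ha3])
    · exact memP0_memQ0 ha3 ha1
    · exact h13 rfl
    · exact memP0_memQ0 ha2 ha1
    · exact h23 rfl
    · exact h13 rfl
    · exact h12 rfl
    · exact h12 rfl
    · exact h12 rfl
  · have hd : Disjoint ((univ.erase (0 : ZMod n)).image (Lg n))
        ({lineP n 0, lineQ n 0} : Finset (Finset (CPt n))) := by
      rw [Finset.disjoint_left]
      intro l hl hl'
      obtain ⟨g, _, rfl⟩ := Finset.mem_image.1 hl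
      rcases Finset.mem_insert.1 hl' with h | h
      · exact Lg_ne_lineP h
      · exact Lg_ne_lineQ (Finset.mem_singleton.1 h)
    rw [Finset.card_union_of_disjoint hd,
      Finset.card_image_of_injective _ Lg_injective,
      Finset.card_erase_of_mem (mem_univ _),
      Finset.card_insert_of_notMem (by simp [lineP_ne_lineQ]), card_singleton]
    simp only [Finset.card_univ, ZMod.card]
    omega

end Nu2

section Nu2Upper
variable {n : ℕ} [NeZero n]

lemma packing_card (hn : 3 ≤ n) (hodd : Odd n) {R : Finset (Finset (CPt n))}
    (hR : Is2Packing (CLines n) R) : R.card ≤ n + 1 := by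
  classical
  obtain ⟨hRL, hR3⟩ := hR
  set SH := univ.filter (fun g : ZMod n => g ≠ 0 ∧ Lg n g ∈ R) with hSHdef
  set xs := univ.filter (fun x : ZMod n => lineP n x ∈ R) with hxsdef
  set ds := univ.filter (fun d : ZMod n => lineQ n d ∈ R) with hdsdef
  have hsub : R ⊆ SH.image (Lg n) ∪ xs.image (lineP n) ∪ ds.image (lineQ n) := by
    intro l hl
    rcases mem_CLines.1 (hRL hl) with ⟨g, hg, rfl⟩ | ⟨g, rfl⟩ | ⟨g, rfl⟩
    · exact Finset.mem_union_left _ (Finset.mem_union_left _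
        (Finset.mem_image.2 ⟨g, Finset.mem_filter.2 ⟨mem_univ _, hg, hl⟩, rfl⟩))
    · exact Finset.mem_union_left _ (Finset.mem_union_right _
        (Finset.mem_image.2 ⟨g, Finset.mem_filter.2 ⟨mem_univ _, hl⟩, rfl⟩))
    · exact Finset.mem_union_right _
        (Finset.mem_image.2 ⟨g, Finset.mem_filter.2 ⟨mem_univ _, hl⟩, rfl⟩)
  have hcard : R.card ≤ SH.card + xs.card + ds.card := by
    calc R.card ≤ (SH.image (Lg n) ∪ xs.image (lineP n) ∪ ds.image (lineQ n)).card :=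
          card_le_card hsub
      _ ≤ (SH.image (Lg n) ∪ xs.image (lineP n)).card + (ds.image (lineQ n)).card :=
          Finset.card_union_le _ _
      _ ≤ (SH.image (Lg n)).card + (xs.image (lineP n)).card + (ds.image (lineQ n)).card :=
          Nat.add_le_add_right (Finset.card_union_le _ _) _
      _ ≤ SH.card + xs.card + ds.card := by
          gcongr <;> exact Finset.card_image_le
  have hxs2 : xs.card ≤ 2 := by
    by_contra h
    push_neg at h
    obtain ⟨a, b, c, ha, hb, hc, hab, hac, hbc⟩ := Finset.two_lt_card_iff.1 h
    have hemp := hR3 _ (Finset.mem_filter.1 ha).2 _ (Finset.mem_filter.1 hb).2 _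
      (Finset.mem_filter.1 hc).2 ((lineP_injective hn).ne hab)
      ((lineP_injective hn).ne hac) ((lineP_injective hn).ne hbc)
    have : (Sum.inr 0 : CPt n) ∈ lineP n a ∩ lineP n b ∩ lineP n c := by
      rw [Finset.mem_inter, Finset.mem_inter]
      exact ⟨⟨inr_mem_lineP.2 rfl, inr_mem_lineP.2 rfl⟩, inr_mem_lineP.2 rfl⟩
    rw [hemp] at this
    exact Finset.notMem_empty _ this
  have hds2 : ds.card ≤ 2 := by
    by_contra h
    push_neg at h
    obtain ⟨a, b, c, ha, hb, hc, hab, hac, hbc⟩ := Finset.two_lt_card_iff.1 h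
    have hemp := hR3 _ (Finset.mem_filter.1 ha).2 _ (Finset.mem_filter.1 hb).2 _
      (Finset.mem_filter.1 hc).2 ((lineQ_injective hn).ne hab)
      ((lineQ_injective hn).ne hac) ((lineQ_injective hn).ne hbc)
    have : (Sum.inr 1 : CPt n) ∈ lineQ n a ∩ lineQ n b ∩ lineQ n c := by
      rw [Finset.mem_inter, Finset.mem_inter]
      exact ⟨⟨inr_mem_lineQ.2 rfl, inr_mem_lineQ.2 rfl⟩, inr_mem_lineQ.2 rfl⟩
    rw [hemp] at this
    exact Finset.notMem_empty _ this
  set F := (xs ×ˢ ds).image (fun p : ZMod n × ZMod n => p.1 + p.2) with hFdef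
  have hFmem : ∀ x ∈ xs, ∀ d ∈ ds, x + d ∈ F := by
    intro x hx d hd
    exact Finset.mem_image.2 ⟨(x, d), Finset.mem_product.2 ⟨hx, hd⟩, rfl⟩
  have hcon : ∀ g ∈ SH, g ∉ F := by
    intro g hg hgF
    obtain ⟨⟨x, d⟩, hxd, heq⟩ := Finset.mem_image.1 hgF
    obtain ⟨hx, hd⟩ := Finset.mem_product.1 hxd
    obtain ⟨-, hg0, hgR⟩ := Finset.mem_filter.1 hg
    have hemp := hR3 _ hgR _ (Finset.mem_filter.1 hx).2 _ (Finset.mem_filter.1 hd).2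
      Lg_ne_lineP Lg_ne_lineQ lineP_ne_lineQ
    have : (Sum.inl (x, g) : CPt n) ∈ Lg n g ∩ lineP n x ∩ lineQ n d := by
      rw [Finset.mem_inter, Finset.mem_inter]
      exact ⟨⟨inl_mem_Lg.2 rfl, inl_mem_lineP.2 ⟨rfl, hg0⟩⟩,
        inl_mem_lineQ.2 ⟨heq.symm, hg0⟩⟩
    rw [hemp] at this
    exact Finset.notMem_empty _ this
  have hkey : SH.card + ((univ.erase (0 : ZMod n)) ∩ F).card ≤ n - 1 := by
    have hdisj : Disjoint SH ((univ.erase (0 : ZMod n)) ∩ F) := by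
      rw [Finset.disjoint_left]
      intro g hg hg'
      exact hcon g hg (Finset.mem_inter.1 hg').2
    have hsub2 : SH ∪ ((univ.erase (0 : ZMod n)) ∩ F) ⊆ univ.erase (0 : ZMod n) := by
      intro g hg
      rcases Finset.mem_union.1 hg with h | h
      · exact Finset.mem_erase.2 ⟨(Finset.mem_filter.1 h).2.1, mem_univ _⟩
      · exact (Finset.mem_inter.1 h).1
    have := card_le_card hsub2
    rw [Finset.card_union_of_disjoint hdisj] at this
    rwa [Finset.card_erase_of_mem (mem_univ _), Finset.card_univ, ZMod.card] at this
  rcases Nat.lt_or_ge (xs.card + ds.card) 3 with hbc | hbc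
  · omega
  · -- xs.card + ds.card ≥ 3
    have hxs1 : 1 ≤ xs.card := by omega
    have hds1 : 1 ≤ ds.card := by omega
    rcases Nat.lt_or_ge (xs.card + ds.card) 4 with hbc4 | hbc4
    · -- exactly 3 : two distinct elements of F
      have hAB : ∃ A B, A ∈ F ∧ B ∈ F ∧ A ≠ B := by
        rcases Nat.lt_or_ge 1 xs.card with h2 | h2
        · obtain ⟨a, b, ha, hb, hab⟩ := Finset.one_lt_card_iff.1 h2
          obtain ⟨d, hd⟩ := Finset.card_pos.1 hds1
          exact ⟨a + d, b + d, hFmem a ha d hd, hFmem b hb d hd,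
            fun h => hab (by linear_combination h)⟩
        · have h2' : 1 < ds.card := by omega
          obtain ⟨c, e, hc, he, hce⟩ := Finset.one_lt_card_iff.1 h2'
          obtain ⟨a, ha⟩ := Finset.card_pos.1 hxs1
          exact ⟨a + c, a + e, hFmem a ha c hc, hFmem a ha e he,
            fun h => hce (by linear_combination h)⟩
      obtain ⟨A, B, hA, hB, hABne⟩ := hAB
      have hsub3 : ({A, B} : Finset (ZMod n)).erase 0 ⊆ (univ.erase (0 : ZMod n)) ∩ F := by
        intro x hx
        obtain ⟨hx0, hxAB⟩ := Finset.mem_erase.1 hx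
        refine Finset.mem_inter.2 ⟨Finset.mem_erase.2 ⟨hx0, mem_univ _⟩, ?_⟩
        rcases Finset.mem_insert.1 hxAB with rfl | h
        · exact hA
        · rw [Finset.mem_singleton.1 h]; exact hB
      have h1 : 1 ≤ ((univ.erase (0 : ZMod n)) ∩ F).card := by
        have hc2 : ({A, B} : Finset (ZMod n)).card = 2 := by
          rw [Finset.card_insert_of_notMem (by simpa using hABne), card_singleton]
        have := Finset.pred_card_le_card_erase (s := ({A, B} : Finset (ZMod n))) (a := 0)
        have := card_le_card hsub3
        omega
      omega
    · -- xs.card = 2, ds.card = 2 : three distinct elements of F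
      have hx2 : 1 < xs.card := by omega
      have hd2 : 1 < ds.card := by omega
      obtain ⟨a, b, ha, hb, hab⟩ := Finset.one_lt_card_iff.1 hx2
      obtain ⟨c, e, hc, he, hce⟩ := Finset.one_lt_card_iff.1 hd2
      have hABC : ∃ A B C, A ∈ F ∧ B ∈ F ∧ C ∈ F ∧ A ≠ B ∧ A ≠ C ∧ B ≠ C := by
        by_cases hq : a + e = b + c
        · refine ⟨a + c, a + e, b + e, hFmem a ha c hc, hFmem a ha e he,
            hFmem b hb e he, fun h => hce (by linear_combination h), ?_,
            fun h => hab (by linear_combination h)⟩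
          intro h
          have h2 : (2 : ZMod n) * a = 2 * b := by linear_combination h + hq
          exact hab ((two_unit hodd).mul_left_cancel h2)
        · exact ⟨a + c, a + e, b + c, hFmem a ha c hc, hFmem a ha e he,
            hFmem b hb c hc, fun h => hce (by linear_combination h),
            fun h => hab (by linear_combination h), hq⟩
      obtain ⟨A, B, C, hA, hB, hC, hAB, hAC, hBC⟩ := hABC
      have hsub3 : ({A, B, C} : Finset (ZMod n)).erase 0 ⊆ (univ.erase (0 : ZMod n)) ∩ F := by
        intro x hx
        obtain ⟨hx0, hxABC⟩ := Finset.mem_erase.1 hx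
        refine Finset.mem_inter.2 ⟨Finset.mem_erase.2 ⟨hx0, mem_univ _⟩, ?_⟩
        rcases Finset.mem_insert.1 hxABC with rfl | h
        · exact hA
        · rcases Finset.mem_insert.1 h with rfl | h
          · exact hB
          · rw [Finset.mem_singleton.1 h]; exact hC
      have h1 : 2 ≤ ((univ.erase (0 : ZMod n)) ∩ F).card := by
        have hc3 : ({A, B, C} : Finset (ZMod n)).card = 3 := by
          rw [Finset.card_insert_of_notMem (by simp [hAB, hAC]),
            Finset.card_insert_of_notMem (by simpa using hBC), card_singleton]
        have := Finset.pred_card_le_card_erase (s := ({A, B, C} : Finset (ZMod n))) (a := 0)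
        have := card_le_card hsub3
        omega
      omega

lemma nu2_eq (hn : 3 ≤ n) (hodd : Odd n) : nu2 (CLines n) = n + 1 := by
  obtain ⟨R0, hR0, hR0card⟩ := packing_lb (n := n) hn
  unfold nu2
  apply le_antisymm
  · apply csSup_le ⟨n + 1, Set.mem_setOf.2 ⟨R0, hR0, hR0card⟩⟩
    rintro m ⟨R, hR, rfl⟩
    exact packing_card hn hodd hR
  · apply le_csSup
    · refine ⟨n + 1, ?_⟩
      rintro m ⟨R, hR, rfl⟩
      exact packing_card hn hodd hR
    · exact Set.mem_setOf.2 ⟨R0, hR0, hR0card⟩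

end Nu2Upper

/-- For odd `n ≥ 3`, the system `C_{n,n+1} = (P_n, ℒ_n)` is an
`n`-uniform linear system with `τ(C_{n,n+1}) = ν₂(C_{n,n+1}) = n + 1`. -/
theorem stmt18 (n : ℕ) [NeZero n] (hn : 3 ≤ n) (hodd : Odd n) :
    IsLinearSystem (CPoints n) (CLines n) ∧
      (∀ l ∈ CLines n, l.card = n) ∧
      tau (CPoints n) (CLines n) = n + 1 ∧
      nu2 (CLines n) = n + 1 := by
  refine ⟨isLS hn, ?_, tau_eq hn hodd, nu2_eq hn hodd⟩
  intro l hl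
  rcases mem_CLines.1 hl with ⟨g, _, rfl⟩ | ⟨g, rfl⟩ | ⟨g, rfl⟩
  exacts [Lg_card, lineP_card, lineQ_card]
end
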